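/- arXiv:2412.04401 — 10 statements merged into one kernel-verified Lean document; each statement's English description precedes it below -/
import Mathlib

section
/- Let K be a compact Hausdorff space which is Gruenhage (equivalently, which admits a σ-distributively point-finite separating cover by open sets). Then K has a dense G_δ subset which is metrizable in the subspace topology. -/
open Set Topology Filter

namespace GruenhageProof

variable {K : Type*} [TopologicalSpace K]

/-- A wrapper around `Set K` carrying no topology instance (to be used with the
discrete topology). -/
structure DiscSet (K : Type*) where
  val : Set K

/-- The canonical "partition with residue" associated to a family of open sets. -/
def cellO (B : Set (Set K)) : Set (Set K) :=
  ((fun V => V \ closure (⋃₀ (B \ {V}))) '' B) ∪ {(closure (⋃₀ B))ᶜ}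

lemma mem_cellO_of_mem {B : Set (Set K)} {V : Set K} (hV : V ∈ B) :
    V \ closure (⋃₀ (B \ {V})) ∈ cellO B := Or.inl ⟨V, hV, rfl⟩

lemma compl_closure_mem_cellO (B : Set (Set K)) : (closure (⋃₀ B))ᶜ ∈ cellO B := Or.inr rfl

lemma isOpen_of_mem_cellO {B : Set (Set K)} (hB : ∀ V ∈ B, IsOpen V)
    {A : Set K} (hA : A ∈ cellO B) : IsOpen A := by
  rcases hA with ⟨V, hV, rfl⟩ | hA
  · exact (hB V hV).sdiff isClosed_closure
  · rw [mem_singleton_iff] at hA; subst hA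
    exact isClosed_closure.isOpen_compl

/-- A cell containing a point of a member `V` of `B` must be the `V`-cell. -/
lemma cellO_eq_of_mem {B : Set (Set K)} {A V : Set K} (hA : A ∈ cellO B)
    {x : K} (hx : x ∈ A) (hV : V ∈ B) (hxV : x ∈ V) :
    A = V \ closure (⋃₀ (B \ {V})) := by
  rcases hA with ⟨W, hW, rfl⟩ | hA
  · by_cases hWV : W = V
    · subst hWV; rfl
    · refine absurd (subset_closure (mem_sUnion.2 ⟨V, (Set.mem_diff V).2 ⟨hV, fun hs => hWV (by
        simpa using hs.symm)⟩, hxV⟩)) hx.2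
  · rw [mem_singleton_iff] at hA; subst hA
    exact absurd (subset_closure (mem_sUnion.2 ⟨V, hV, hxV⟩)) hx

/-- A cell containing a point outside a member `V` of `B` is disjoint from `closure V`. -/
lemma cellO_subset_compl_closure {B : Set (Set K)} {A V : Set K} (hA : A ∈ cellO B)
    {x : K} (hx : x ∈ A) (hV : V ∈ B) (hxV : x ∉ V) :
    A ⊆ (closure V)ᶜ := by
  rcases hA with ⟨W, hW, rfl⟩ | hA
  · by_cases hWV : W = V
    · subst hWV; exact absurd hx.1 hxV
    · intro y hy
      exact fun hyc => hy.2 (closure_mono (fun z hz => mem_sUnion.2 ⟨V, (Set.mem_diff V).2 ⟨hV, fun hs => hWV (by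
        simpa using hs.symm)⟩, hz⟩) hyc)
  · rw [mem_singleton_iff] at hA; subst hA
    intro y hy
    exact fun hyc => hy (closure_mono (fun z hz => mem_sUnion.2 ⟨V, hV, hz⟩) hyc)

/-- Two cells containing a common point coincide. -/
lemma cellO_unique {B : Set (Set K)} {A A' : Set K} (hA : A ∈ cellO B) (hA' : A' ∈ cellO B)
    {x : K} (hx : x ∈ A) (hx' : x ∈ A') : A = A' := by
  rcases hA with ⟨V, hV, rfl⟩ | hA
  · rw [cellO_eq_of_mem hA' hx' hV hx.1]
  · rw [mem_singleton_iff] at hA; subst hA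
    rcases hA' with ⟨W, hW, rfl⟩ | hA'
    · exact absurd (subset_closure (mem_sUnion.2 ⟨W, hW, hx'.1⟩)) hx
    · rw [mem_singleton_iff] at hA'; subst hA'; rfl

/-- The union of the cells of a pairwise disjoint family of open sets is dense. -/
lemma dense_sUnion_cellO {B : Set (Set K)} (hB : ∀ V ∈ B, IsOpen V)
    (hd : B.Pairwise fun V W => Disjoint V W) : Dense (⋃₀ cellO B) := by
  rw [dense_iff_inter_open]
  intro G hG hGne
  by_cases hmeet : (G ∩ ⋃₀ B).Nonempty
  · obtain ⟨w, hwG, V, hV, hwV⟩ := hmeet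
    by_cases hsub : ((G ∩ V) ∩ (closure (⋃₀ (B \ {V})))ᶜ).Nonempty
    · obtain ⟨u, ⟨huG, huV⟩, huc⟩ := hsub
      exact ⟨u, huG, mem_sUnion.2 ⟨_, mem_cellO_of_mem hV, huV, huc⟩⟩
    · exfalso
      have h1 : G ∩ V ⊆ closure (⋃₀ (B \ {V})) := by
        intro u hu
        by_contra hc
        exact hsub ⟨u, hu, hc⟩
      have h2 : ((G ∩ V) ∩ ⋃₀ (B \ {V})).Nonempty := by
        have hw : w ∈ closure (⋃₀ (B \ {V})) := h1 ⟨hwG, hwV⟩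
        rw [mem_closure_iff] at hw
        exact hw (G ∩ V) (hG.inter (hB V hV)) ⟨hwG, hwV⟩
      obtain ⟨u, ⟨-, huV⟩, W, ⟨hWB, hWne⟩, huW⟩ := h2
      exact Set.disjoint_left.1 (hd hV hWB (fun hs => hWne (by simpa using hs.symm))) huV huW
  · by_cases hcl : (G ∩ (closure (⋃₀ B))ᶜ).Nonempty
    · obtain ⟨u, huG, huc⟩ := hcl
      exact ⟨u, huG, mem_sUnion.2 ⟨_, compl_closure_mem_cellO B, huc⟩⟩
    · exfalso
      obtain ⟨w, hw⟩ := hGne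
      have hwcl : w ∈ closure (⋃₀ B) := by
        by_contra hc
        exact hcl ⟨w, hw, hc⟩
      rw [mem_closure_iff] at hwcl
      exact hmeet (hwcl G hG hw)

/-- Existence of a maximal disjoint family of open sets whose closures avoid `C`. -/
lemma exists_shrink (C : Set K) :
    ∃ 𝒲 : Set (Set K), (∀ W ∈ 𝒲, IsOpen W) ∧ (∀ W ∈ 𝒲, Disjoint (closure W) C) ∧
      (𝒲.Pairwise fun V W => Disjoint V W) ∧
      ∀ W', IsOpen W' → Disjoint (closure W') C → (∀ W ∈ 𝒲, Disjoint W' W) → W' = ∅ := by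
  set P : Set (Set (Set K)) := {𝒲 | (∀ W ∈ 𝒲, IsOpen W) ∧ (∀ W ∈ 𝒲, Disjoint (closure W) C) ∧
    (𝒲.Pairwise fun V W => Disjoint V W)} with hP
  have hchain : ∀ c ⊆ P, IsChain (· ⊆ ·) c → ∃ ub ∈ P, ∀ s ∈ c, s ⊆ ub := by
    intro c hc hic
    refine ⟨⋃₀ c, ⟨?_, ?_, ?_⟩, fun s hs => subset_sUnion_of_mem hs⟩
    · rintro W ⟨s, hs, hWs⟩; exact (hc hs).1 W hWs
    · rintro W ⟨s, hs, hWs⟩; exact (hc hs).2.1 W hWs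
    · rintro V ⟨s, hs, hVs⟩ W ⟨t, ht, hWt⟩ hne
      rcases hic.total hs ht with hst | hts
      · exact (hc ht).2.2 (hst hVs) hWt hne
      · exact (hc hs).2.2 hVs (hts hWt) hne
  obtain ⟨M, hM⟩ := zorn_subset P hchain
  obtain ⟨hMo, hMc, hMp⟩ := hM.prop
  refine ⟨M, hMo, hMc, hMp, ?_⟩
  intro W' hW'o hW'c hW'd
  by_contra hne
  have hmem : insert W' M ∈ P := by
    refine ⟨?_, ?_, ?_⟩
    · rintro W (rfl | hW); exacts [hW'o, hMo W hW]
    · rintro W (rfl | hW); exacts [hW'c, hMc W hW]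
    · refine hMp.insert fun W hW _ => ?_
      exact ⟨hW'd W hW, (hW'd W hW).symm⟩
  have hsub : insert W' M ⊆ M := hM.2 hmem (subset_insert _ _)
  have : W' ∈ M := hsub (mem_insert _ _)
  have := hW'd W' this
  rw [disjoint_self] at this
  exact hne this

def BF (c : ℕ → Set (Set K)) (w : Set K → Set (Set K)) : ℕ → Set (Set K)
  | 0 => c 0
  | (j+1) =>
    if (j+1) % 2 = 0 then c ((j+1)/2)
    else w ((⋃₀ cellO (BF c w ((j+1)/2)))ᶜ)
  decreasing_by exact Nat.div_lt_self (Nat.succ_pos j) one_lt_two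

lemma BF_even (c : ℕ → Set (Set K)) (w : Set K → Set (Set K)) (t : ℕ) :
    BF c w (2 * t) = c t := by
  cases t with
  | zero => rw [Nat.mul_zero, BF]
  | succ s =>
    have h : 2 * (s + 1) = (2 * s + 1) + 1 := by ring
    rw [h, BF]
    have h1 : (2 * s + 1 + 1) % 2 = 0 := by omega
    have h2 : (2 * s + 1 + 1) / 2 = s + 1 := by omega
    rw [if_pos h1, h2]

lemma BF_odd (c : ℕ → Set (Set K)) (w : Set K → Set (Set K)) (t : ℕ) :
    BF c w (2 * t + 1) = w ((⋃₀ cellO (BF c w t))ᶜ) := by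
  rw [BF]
  have h1 : ¬((2 * t + 1) % 2 = 0) := by omega
  have h2 : (2 * t + 1) / 2 = t := by omega
  rw [if_neg h1, h2]

end GruenhageProof

/-- A topological space is *Gruenhage* if there is a sequence `(𝒰 n)` of families of open
sets such that for all distinct `x, y` there is `n` with (i) some `U ∈ 𝒰 n` containing
exactly one of `x, y`, and (ii) `{U ∈ 𝒰 n | x ∈ U}` finite or `{U ∈ 𝒰 n | y ∈ U}` finite. -/
def IsGruenhage (X : Type*) [TopologicalSpace X] : Prop :=
  ∃ 𝒰 : ℕ → Set (Set X),
    (∀ n, ∀ U ∈ 𝒰 n, IsOpen U) ∧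
    ∀ x y : X, x ≠ y →
      ∃ n, (∃ U ∈ 𝒰 n, Xor' (x ∈ U) (y ∈ U)) ∧
        ({U ∈ 𝒰 n | x ∈ U}.Finite ∨ {U ∈ 𝒰 n | y ∈ U}.Finite)
open Set Topology Filter GruenhageProof in
/-- Every Gruenhage compact Hausdorff space has a dense `Gδ` metrizable subspace. -/
theorem gruenhage_compact_dense_Gdelta_metrizable
    {K : Type*} [TopologicalSpace K] [CompactSpace K] [T2Space K]
    (h : IsGruenhage K) :
    ∃ S : Set K, Dense S ∧ IsGδ S ∧ TopologicalSpace.MetrizableSpace S := by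
  classical
  obtain ⟨𝒰, hUo, hUs⟩ := h
  -- the "order at least k" open sets
  set E : ℕ → ℕ → Set K := fun n k =>
    {x | ∃ F : Set (Set K), F ⊆ 𝒰 n ∧ F.Finite ∧ F.ncard = k ∧ x ∈ ⋂₀ F} with hEdef
  have hEopen : ∀ n k, IsOpen (E n k) := by
    intro n k
    rw [isOpen_iff_forall_mem_open]
    rintro x ⟨F, hF1, hF2, hF3, hF4⟩
    exact ⟨⋂₀ F, fun y hy => ⟨F, hF1, hF2, hF3, hy⟩,
      hF2.isOpen_sInter (fun t ht => hUo n t (hF1 ht)), hF4⟩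
  set Bad : ℕ → ℕ → Set K := fun n k => closure (E n k) \ E n k with hBaddef
  have hBadclosed : ∀ n k, IsClosed (Bad n k) :=
    fun n k => isClosed_closure.sdiff (hEopen n k)
  have hBadint : ∀ n k, interior (Bad n k) = ∅ := by
    intro n k
    rw [Set.eq_empty_iff_forall_notMem]
    intro u hu
    have h1 : u ∈ closure (E n k) := (interior_subset hu).1
    rw [mem_closure_iff] at h1
    obtain ⟨w, hw1, hw2⟩ := h1 _ isOpen_interior hu
    exact (interior_subset hw1).2 hw2
  -- the normalized disjoint families
  set 𝒟 : ℕ → ℕ → Set (Set K) := fun n k =>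
    {T | ∃ F : Set (Set K), F ⊆ 𝒰 n ∧ F.Finite ∧ F.ncard = k ∧
      T = ⋂₀ F \ closure (⋃₀ (𝒰 n \ F))} with h𝒟def
  have h𝒟open : ∀ n k, ∀ T ∈ 𝒟 n k, IsOpen T := by
    rintro n k T ⟨F, hF1, hF2, _, rfl⟩
    exact (hF2.isOpen_sInter fun t ht => hUo n t (hF1 ht)).sdiff isClosed_closure
  have h𝒟disj : ∀ n k, (𝒟 n k).Pairwise fun V V' => Disjoint V V' := by
    rintro n k T ⟨F, hF1, hF2, hF3, rfl⟩ T' ⟨F', hF1', hF2', hF3', rfl⟩ hne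
    have hFF : ¬(F' ⊆ F) := by
      intro hsub
      have hEQ : F' = F :=
        Set.eq_of_subset_of_ncard_le hsub (by rw [hF3, hF3']) hF2
      exact hne (by rw [hEQ])
    obtain ⟨U, hUF', hUF⟩ := Set.not_subset.1 hFF
    rw [Set.disjoint_left]
    rintro a ⟨_, ha2⟩ ⟨hb1, _⟩
    exact ha2 (subset_closure (mem_sUnion.2 ⟨U, ⟨hF1' hUF', hUF⟩, mem_sInter.1 hb1 U hUF'⟩))
  -- key separation lemma
  have hkey : ∀ n (p q : K), ({U ∈ 𝒰 n | p ∈ U}).Finite →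
      (∃ U ∈ 𝒰 n, Xor' (p ∈ U) (q ∈ U)) → (∀ k, p ∉ Bad n k) →
      ∃ k T, T ∈ 𝒟 n k ∧ p ∈ T ∧ q ∉ T := by
    rintro n p q hfin ⟨U, hU, hxor⟩ hbad
    set F := {U ∈ 𝒰 n | p ∈ U} with hF
    set k := F.ncard with hk
    have hpE : p ∉ E n (k + 1) := by
      rintro ⟨F', h1, _, h3, h4⟩
      have hsub : F' ⊆ F := fun V hV => ⟨h1 hV, mem_sInter.1 h4 V hV⟩
      have := Set.ncard_le_ncard hsub hfin
      omega
    have hpcl : p ∉ closure (E n (k + 1)) := fun hc => hbad (k + 1) ⟨hc, hpE⟩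
    have hpF : p ∈ ⋂₀ F := mem_sInter.2 fun V hV => hV.2
    have hpnotcl : p ∉ closure (⋃₀ (𝒰 n \ F)) := by
      intro hp
      rw [mem_closure_iff] at hp
      have hNopen : IsOpen (⋂₀ F ∩ (closure (E n (k + 1)))ᶜ) :=
        (hfin.isOpen_sInter fun t ht => hUo n t ht.1).inter isClosed_closure.isOpen_compl
      obtain ⟨w, ⟨hwF, hwE⟩, hwmem⟩ := hp _ hNopen ⟨hpF, hpcl⟩
      obtain ⟨Wm, ⟨hWU, hWF⟩, hwW⟩ := mem_sUnion.1 hwmem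
      refine hwE (subset_closure ?_)
      refine ⟨insert Wm F, Set.insert_subset hWU (fun V hV => hV.1), hfin.insert Wm, ?_, ?_⟩
      · rw [Set.ncard_insert_of_notMem hWF hfin]
      · rw [Set.sInter_insert]; exact ⟨hwW, hwF⟩
    have hT : (⋂₀ F \ closure (⋃₀ (𝒰 n \ F))) ∈ 𝒟 n k :=
      ⟨F, fun V hV => hV.1, hfin, rfl, rfl⟩
    refine ⟨k, _, hT, ⟨hpF, hpnotcl⟩, ?_⟩
    rcases hxor with ⟨hpU, hqU⟩ | ⟨hqU, hpU⟩
    · intro hq; exact hqU (mem_sInter.1 hq.1 U ⟨hU, hpU⟩)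
    · intro hq
      exact hq.2 (subset_closure (mem_sUnion.2 ⟨U, ⟨hU, fun hUF => hpU hUF.2⟩, hqU⟩))
  have hsep : ∀ x y : K, x ≠ y → (∀ n k, x ∉ Bad n k) → (∀ n k, y ∉ Bad n k) →
      ∃ n k T, T ∈ 𝒟 n k ∧ ((x ∈ T ∧ y ∉ T) ∨ (y ∈ T ∧ x ∉ T)) := by
    intro x y hne hbx hby
    obtain ⟨n, hxor, hfin⟩ := hUs x y hne
    rcases hfin with hfx | hfy
    · obtain ⟨kk, T, h1, h2, h3⟩ := hkey n x y hfx hxor (hbx n)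
      exact ⟨n, kk, T, h1, Or.inl ⟨h2, h3⟩⟩
    · obtain ⟨U, hU, hxor'⟩ := hxor
      obtain ⟨kk, T, h1, h2, h3⟩ := hkey n y x hfy ⟨U, hU, hxor'.symm⟩ (hby n)
      exact ⟨n, kk, T, h1, Or.inr ⟨h2, h3⟩⟩
  -- choose maximal shrink families
  choose W hW1 hW2 hW3 hW4 using fun C : Set K => exists_shrink (K := K) C
  have hWdense : ∀ C : Set K, IsClosed C → interior C = ∅ → Dense (⋃₀ W C) := by
    intro C hC hCi
    rw [dense_iff_inter_open]
    intro G hG hGne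
    by_contra hno
    rw [Set.not_nonempty_iff_eq_empty] at hno
    have hGC : (G ∩ Cᶜ).Nonempty := by
      by_contra hempty
      rw [Set.not_nonempty_iff_eq_empty] at hempty
      have hsubC : G ⊆ C := by
        intro u hu
        by_contra huc
        exact absurd hempty (Set.nonempty_iff_ne_empty.1 ⟨u, hu, huc⟩)
      obtain ⟨g, hg⟩ := hGne
      have : g ∈ interior C := interior_maximal hsubC hG hg
      rw [hCi] at this
      exact this
    obtain ⟨u, huG, huC⟩ := hGC
    obtain ⟨t, ht, htc, hts⟩ :=
      exists_mem_nhds_isClosed_subset ((hG.inter hC.isOpen_compl).mem_nhds ⟨huG, huC⟩)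
    have hW'cl : Disjoint (closure (interior t)) C := by
      refine Set.disjoint_left.2 fun a ha haC => ?_
      have hat : a ∈ t := htc.closure_subset_iff.2 subset_rfl (closure_mono interior_subset ha)
      exact (hts hat).2 haC
    have hW'd : ∀ Wm ∈ W C, Disjoint (interior t) Wm := by
      intro Wm hWm
      refine Set.disjoint_left.2 fun a ha haW => ?_
      have haG : a ∈ G := (hts (interior_subset ha)).1
      have : a ∈ G ∩ ⋃₀ W C := ⟨haG, mem_sUnion.2 ⟨Wm, hWm, haW⟩⟩
      rw [hno] at this
      exact this
    have hempty := hW4 C _ isOpen_interior hW'cl hW'd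
    have hu : u ∈ interior t := mem_interior_iff_mem_nhds.2 ht
    rw [hempty] at hu
    exact hu
  -- enumeration of the base families
  set c : ℕ → Set (Set K) := fun t =>
    if t % 2 = 0 then 𝒟 (Nat.unpair (t / 2)).1 (Nat.unpair (t / 2)).2
    else W (Bad (Nat.unpair (t / 2)).1 (Nat.unpair (t / 2)).2) with hcdef
  have hccases : ∀ t, (∃ n k, c t = 𝒟 n k) ∨ (∃ C, c t = W C) := by
    intro t
    by_cases ht : t % 2 = 0
    · exact Or.inl ⟨(Nat.unpair (t / 2)).1, (Nat.unpair (t / 2)).2,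
        by rw [hcdef]; simp only [if_pos ht]⟩
    · exact Or.inr ⟨Bad (Nat.unpair (t / 2)).1 (Nat.unpair (t / 2)).2,
        by rw [hcdef]; simp only [if_neg ht]⟩
  have hBcases : ∀ j, (∃ n k, BF c W j = 𝒟 n k) ∨ (∃ C, BF c W j = W C) := by
    intro j
    cases j with
    | zero => rw [BF]; exact hccases 0
    | succ i =>
      by_cases hp : (i + 1) % 2 = 0
      · rw [BF, if_pos hp]; exact hccases _
      · rw [BF, if_neg hp]; exact Or.inr ⟨_, rfl⟩
  have hBopen : ∀ j, ∀ V ∈ BF c W j, IsOpen V := by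
    intro j V hV
    rcases hBcases j with ⟨n, k, hj⟩ | ⟨C, hj⟩
    · rw [hj] at hV; exact h𝒟open n k V hV
    · rw [hj] at hV; exact hW1 C V hV
  have hBpair : ∀ j, (BF c W j).Pairwise fun V V' => Disjoint V V' := by
    intro j
    rcases hBcases j with ⟨n, k, hj⟩ | ⟨C, hj⟩
    · rw [hj]; exact h𝒟disj n k
    · rw [hj]; exact hW3 C
  set D : ℕ → Set K := fun j => ⋃₀ cellO (BF c W j) with hDdef
  have hDopen : ∀ j, IsOpen (D j) :=
    fun j => isOpen_sUnion fun A hA => isOpen_of_mem_cellO (hBopen j) hA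
  have hDdense : ∀ j, Dense (D j) := fun j => dense_sUnion_cellO (hBopen j) (hBpair j)
  -- the dense Gδ set
  set S : Set K := ⋂ i : ℕ ⊕ ℕ × ℕ, Sum.elim D (fun p => (Bad p.1 p.2)ᶜ) i with hSdef
  have hGopen : ∀ i : ℕ ⊕ ℕ × ℕ, IsOpen (Sum.elim D (fun p => (Bad p.1 p.2)ᶜ) i) := by
    rintro (j | p)
    · exact hDopen j
    · exact (hBadclosed p.1 p.2).isOpen_compl
  have hGdense : ∀ i : ℕ ⊕ ℕ × ℕ, Dense (Sum.elim D (fun p => (Bad p.1 p.2)ᶜ) i) := by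
    rintro (j | p)
    · exact hDdense j
    · exact interior_eq_empty_iff_dense_compl.1 (hBadint p.1 p.2)
  have hSdense : Dense S := dense_iInter_of_isOpen hGopen hGdense
  have hSgdelta : IsGδ S := IsGδ.iInter fun i => (hGopen i).isGδ
  have hSD : ∀ x ∈ S, ∀ j, x ∈ D j := fun x hx j => mem_iInter.1 hx (Sum.inl j)
  have hSBad : ∀ x ∈ S, ∀ n k, x ∉ Bad n k := fun x hx n k => mem_iInter.1 hx (Sum.inr (n, k))
  -- cells
  have hcell0 : ∀ (x : S) (j : ℕ), ∃ A, A ∈ cellO (BF c W j) ∧ (x : K) ∈ A := by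
    intro x j
    obtain ⟨A, hA, hxA⟩ := mem_sUnion.1 (hSD x x.2 j)
    exact ⟨A, hA, hxA⟩
  choose cell hcellmem hcellx using hcell0
  set B : S → ℕ → Set K := fun x m => ⋂ j ∈ Finset.range (m + 1), cell x j with hB2def
  have hBmem : ∀ x m, (x : K) ∈ B x m := by
    intro x m
    rw [hB2def, Set.mem_iInter₂]
    exact fun j _ => hcellx x j
  have hBsub : ∀ x m j, j ≤ m → B x m ⊆ cell x j := by
    intro x m j hj a ha
    rw [hB2def, Set.mem_iInter₂] at ha
    exact ha j (Finset.mem_range.2 (by omega))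
  have hBanti : ∀ (x : S) (m m' : ℕ), m ≤ m' → B x m' ⊆ B x m := by
    intro x m m' hmm a ha
    rw [hB2def, Set.mem_iInter₂] at ha ⊢
    intro j hj
    exact ha j (Finset.mem_range.2 (by have := Finset.mem_range.1 hj; omega))
  have hDindex : ∀ n k, BF c W (2 * (2 * Nat.pair n k)) = 𝒟 n k := by
    intro n k
    rw [BF_even, hcdef]
    simp only [if_pos (by omega : (2 * Nat.pair n k) % 2 = 0)]
    rw [(by omega : (2 * Nat.pair n k) / 2 = Nat.pair n k), Nat.unpair_pair]
  -- the neighborhood base claim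
  have hbase : ∀ (x : S) (O : Set K), IsOpen O → (x : K) ∈ O → ∃ m, B x m ⊆ O := by
    intro x O hO hxO
    by_contra hc
    push_neg at hc
    have hZne : ∀ m, (closure (B x m) ∩ Oᶜ).Nonempty := by
      intro m
      obtain ⟨y, hy1, hy2⟩ := Set.not_subset.1 (hc m)
      exact ⟨y, subset_closure hy1, hy2⟩
    have hZdir : Directed (· ⊇ ·) (fun m => closure (B x m) ∩ Oᶜ) := by
      intro m m'
      exact ⟨max m m',
        inter_subset_inter (closure_mono (hBanti x _ _ (le_max_left m m'))) subset_rfl,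
        inter_subset_inter (closure_mono (hBanti x _ _ (le_max_right m m'))) subset_rfl⟩
    obtain ⟨z, hz⟩ := IsCompact.nonempty_iInter_of_directed_nonempty_isCompact_isClosed _
      hZdir hZne (fun m => (isClosed_closure.inter hO.isClosed_compl).isCompact)
      (fun m => isClosed_closure.inter hO.isClosed_compl)
    rw [mem_iInter] at hz
    have hzcl : ∀ m, z ∈ closure (B x m) := fun m => (hz m).1
    have hzO : z ∉ O := (hz 0).2
    have hzx : z ≠ (x : K) := fun hzx => hzO (hzx ▸ hxO)
    have hf1 : ∀ j V, V ∈ BF c W j → z ∈ V → (x : K) ∈ V := by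
      intro j V hV hzV
      by_contra hxV
      have hsubA : B x j ⊆ (closure V)ᶜ :=
        (hBsub x j j le_rfl).trans
          (cellO_subset_compl_closure (hcellmem x j) (hcellx x j) hV hxV)
      have hcl : closure (B x j) ⊆ Vᶜ :=
        closure_minimal (hsubA.trans (compl_subset_compl.2 subset_closure))
          (hBopen j V hV).isClosed_compl
      exact hcl (hzcl j) hzV
    have hf2 : ∀ (C : Set K) (j : ℕ), BF c W j = W C → IsClosed C → interior C = ∅ →
        z ∉ C := by
      intro C j hj hC hCi
      have hdense := hWdense C hC hCi
      have hAmem : cell x j ∈ cellO (W C) := by rw [← hj]; exact hcellmem x j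
      rcases hAmem with ⟨V, hV, hVeq⟩ | hA
      · have hsub : B x j ⊆ V := (hBsub x j j le_rfl).trans (by
          intro a ha; rw [← hVeq] at ha; exact ha.1)
        have hzV : z ∈ closure V := closure_mono hsub (hzcl j)
        exact fun hzC => Set.disjoint_left.1 (hW2 C V hV) hzV hzC
      · exfalso
        rw [mem_singleton_iff] at hA
        have hx := hcellx x j
        rw [hA, hdense.closure_eq, compl_univ] at hx
        exact hx
    have hzD : ∀ j, z ∈ D j := by
      intro j
      by_contra hzDj
      have hj : BF c W (2 * j + 1) = W ((D j)ᶜ) := by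
        rw [BF_odd, hDdef]
      exact hf2 ((D j)ᶜ) (2 * j + 1) hj (hDopen j).isClosed_compl
        (by rw [interior_compl, (hDdense j).closure_eq, compl_univ]) hzDj
    have hzBad : ∀ n k, z ∉ Bad n k := by
      intro n k
      have hj : BF c W (2 * (2 * Nat.pair n k + 1)) = W (Bad n k) := by
        rw [BF_even, hcdef]
        simp only [if_neg (by omega : ¬((2 * Nat.pair n k + 1) % 2 = 0))]
        rw [(by omega : (2 * Nat.pair n k + 1) / 2 = Nat.pair n k), Nat.unpair_pair]
      exact hf2 (Bad n k) _ hj (hBadclosed n k) (hBadint n k)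
    have hzS : z ∈ S := by
      rw [hSdef, mem_iInter]
      rintro (j | p)
      · exact hzD j
      · exact hzBad p.1 p.2
    obtain ⟨n, k, T, hT, hpat⟩ :=
      hsep (x : K) z (Ne.symm hzx) (hSBad x x.2) (fun n k => hzBad n k)
    rcases hpat with ⟨hxT, hzT⟩ | ⟨hzT, hxT⟩
    · have hTmem : T ∈ BF c W (2 * (2 * Nat.pair n k)) := by rw [hDindex n k]; exact hT
      have hcx : cell x (2 * (2 * Nat.pair n k)) ⊆ T := by
        rw [cellO_eq_of_mem (hcellmem x _) (hcellx x _) hTmem hxT]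
        exact fun a ha => ha.1
      have hzclT : z ∈ closure T :=
        closure_mono ((hBsub x _ _ le_rfl).trans hcx) (hzcl (2 * (2 * Nat.pair n k)))
      have hzcell :=
        cellO_subset_compl_closure (hcellmem ⟨z, hzS⟩ _) (hcellx ⟨z, hzS⟩ _) hTmem hzT
      exact hzcell (hcellx ⟨z, hzS⟩ _) hzclT
    · exact hxT (hf1 _ T (by rw [hDindex n k]; exact hT) hzT)
  -- metrizability via embedding into a countable product of discrete spaces
  letI : UniformSpace (DiscSet K) := ⊥
  haveI : DiscreteTopology (DiscSet K) := discreteTopology_of_discrete_uniformity bot_uniformity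
  haveI : TopologicalSpace.MetrizableSpace (ℕ → DiscSet K) :=
    by letI := PiNat.metricSpaceOfDiscreteUniformity (E := fun _ => DiscSet K) (fun _ => bot_uniformity); exact inferInstance
  have hinj : Function.Injective (fun (x : S) (j : ℕ) => DiscSet.mk (cell x j)) := by
    intro x y hxy
    by_contra hne
    have hnev : (x : K) ≠ (y : K) := fun hv => hne (Subtype.ext hv)
    obtain ⟨n, k, T, hT, hpat⟩ := hsep (x : K) (y : K) hnev (hSBad x x.2) (hSBad y y.2)
    have hTmem : T ∈ BF c W (2 * (2 * Nat.pair n k)) := by rw [hDindex n k]; exact hT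
    rcases hpat with ⟨hxT, hyT⟩ | ⟨hyT, hxT⟩
    · have hcx : cell x (2 * (2 * Nat.pair n k)) ⊆ T := by
        rw [cellO_eq_of_mem (hcellmem x _) (hcellx x _) hTmem hxT]
        exact fun a ha => ha.1
      have hcc : cell y (2 * (2 * Nat.pair n k)) = cell x (2 * (2 * Nat.pair n k)) :=
        (congrArg DiscSet.val (congrFun hxy _)).symm
      exact hyT (hcx (hcc ▸ hcellx y (2 * (2 * Nat.pair n k))))
    · have hcy : cell y (2 * (2 * Nat.pair n k)) ⊆ T := by
        rw [cellO_eq_of_mem (hcellmem y _) (hcellx y _) hTmem hyT]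
        exact fun a ha => ha.1
      have hcc : cell x (2 * (2 * Nat.pair n k)) = cell y (2 * (2 * Nat.pair n k)) :=
        congrArg DiscSet.val (congrFun hxy _)
      exact hxT (hcy (hcc ▸ hcellx x (2 * (2 * Nat.pair n k))))
  have hcont : Continuous (fun (x : S) (j : ℕ) => DiscSet.mk (cell x j)) := by
    apply continuous_pi
    intro j
    have hlc : IsLocallyConstant (fun x : S => DiscSet.mk (cell x j)) := by
      intro s
      have hpre : (fun x : S => DiscSet.mk (cell x j)) ⁻¹' s =
          Subtype.val ⁻¹' (⋃₀ {A | A ∈ cellO (BF c W j) ∧ DiscSet.mk A ∈ s}) := by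
        ext x
        constructor
        · intro hx
          exact mem_sUnion.2 ⟨cell x j, ⟨hcellmem x j, hx⟩, hcellx x j⟩
        · rintro hx
          obtain ⟨A, ⟨hA1, hA2⟩, hxA⟩ := mem_sUnion.1 hx
          have hAA : cell x j = A := cellO_unique (hcellmem x j) hA1 (hcellx x j) hxA
          show DiscSet.mk (cell x j) ∈ s
          rw [hAA]; exact hA2
      rw [hpre]
      exact (isOpen_sUnion fun A hA => isOpen_of_mem_cellO (hBopen j) hA.1).preimage
        continuous_subtype_val
    exact hlc.continuous
  have hind : IsInducing (fun (x : S) (j : ℕ) => DiscSet.mk (cell x j)) := by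
    rw [isInducing_iff_nhds]
    intro x
    refine le_antisymm (hcont.continuousAt (x := x)).le_comap ?_
    intro N hN
    rw [nhds_induced] at hN
    obtain ⟨M, hM, hMN⟩ := hN
    obtain ⟨O, hOM, hO, hxO⟩ := mem_nhds_iff.1 hM
    obtain ⟨m, hm⟩ := hbase x O hO hxO
    refine mem_comap.2
      ⟨{g : ℕ → DiscSet K | ∀ j ∈ Finset.range (m + 1), g j = DiscSet.mk (cell x j)}, ?_, ?_⟩
    · have hEQ : {g : ℕ → DiscSet K | ∀ j ∈ Finset.range (m + 1), g j = DiscSet.mk (cell x j)} =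
          ⋂ j ∈ Finset.range (m + 1),
            (fun g : ℕ → DiscSet K => g j) ⁻¹' {DiscSet.mk (cell x j)} := by
        ext g
        simp only [Set.mem_setOf_eq, Set.mem_iInter, Set.mem_preimage, Set.mem_singleton_iff]
      rw [hEQ]
      refine (Filter.biInter_finset_mem _).2 fun j _ => ?_
      exact (continuous_apply j).continuousAt.preimage_mem_nhds
        ((isOpen_discrete _).mem_nhds rfl)
    · intro y hy
      have hyB : (y : K) ∈ B x m := by
        rw [hB2def, Set.mem_iInter₂]
        intro j hj
        have hcc : cell y j = cell x j := congrArg DiscSet.val (hy j hj)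
        rw [← hcc]
        exact hcellx y j
      exact hMN (hOM (hm hyB))
  have hemb : Topology.IsEmbedding (fun (x : S) (j : ℕ) => DiscSet.mk (cell x j)) := ⟨hind, hinj⟩
  exact ⟨S, hSdense, hSgdelta, hemb.metrizableSpace⟩
end

section
/- Let X be a topological space and let 𝒰 = ⋃_{n∈ℕ} 𝒰ₙ be a family of open subsets of X which is separating (for all distinct x, y ∈ X some U ∈ 𝒰 contains exactly one of x and y) and weakly σ-point-finite (for every x ∈ X and every U ∈ 𝒰 there exists n ∈ ℕ such that U ∈ 𝒰ₙ and {V ∈ 𝒰ₙ : x ∈ V} is finite). Then the decomposition 𝒰 = ⋃_{n∈ℕ} 𝒰ₙ witnesses that X is Gruenhage: for all distinct x, y ∈ X there exists n ∈ ℕ such that some U ∈ 𝒰ₙ contains exactly one of x and y, and {V ∈ 𝒰ₙ : x ∈ V} is finite or {V ∈ 𝒰ₙ : y ∈ V} is finite. In particular every space admitting a separating weakly σ-point-finite family of open sets (e.g. every Gul'ko compact space) is Gruenhage. -/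
/-- A separating, weakly σ-point-finite family of open sets witnesses the Gruenhage
property with the same decomposition. -/
theorem weaklySigmaPointFinite_separating_gruenhage
    {X : Type*} [TopologicalSpace X] (𝒰 : ℕ → Set (Set X))
    (hopen : ∀ n, ∀ U ∈ 𝒰 n, IsOpen U)
    (hsep : ∀ x y : X, x ≠ y → ∃ n, ∃ U ∈ 𝒰 n, Xor' (x ∈ U) (y ∈ U))
    (hwpf : ∀ (x : X) (U : Set X), (∃ n, U ∈ 𝒰 n) →
      ∃ n, U ∈ 𝒰 n ∧ {V ∈ 𝒰 n | x ∈ V}.Finite) :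
    ∀ x y : X, x ≠ y →
      ∃ n, (∃ U ∈ 𝒰 n, Xor' (x ∈ U) (y ∈ U)) ∧
        ({V ∈ 𝒰 n | x ∈ V}.Finite ∨ {V ∈ 𝒰 n | y ∈ V}.Finite) := by
  intro x y hxy
  obtain ⟨n₀, U, hU, hxor⟩ := hsep x y hxy
  rcases hxor with ⟨hx, hy⟩ | ⟨hy, hx⟩
  · obtain ⟨n, hUn, hfin⟩ := hwpf x U ⟨n₀, hU⟩
    exact ⟨n, ⟨U, hUn, Or.inl ⟨hx, hy⟩⟩, Or.inl hfin⟩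
  · obtain ⟨n, hUn, hfin⟩ := hwpf y U ⟨n₀, hU⟩
    exact ⟨n, ⟨U, hUn, Or.inr ⟨hy, hx⟩⟩, Or.inr hfin⟩
end

section
/- Let X be a real Banach space with a sequence of seminorms (pₙ)_{n∈ℕ} such that the formula N(x)² = Σ_{n=0}^∞ pₙ(x)² defines a norm N on X equivalent to the given norm. If x, y ∈ X satisfy N(x) = N(y) = N((x+y)/2), then pₙ(x) = pₙ(y) = pₙ((x+y)/2) for every n ∈ ℕ. -/
lemma tsum_le_pointwise_eq {f g : ℕ → ℝ} (h0 : ∀ n, 0 ≤ f n) (hle : ∀ n, f n ≤ g n)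
    (hg : Summable g) (heq : ∑' n, f n = ∑' n, g n) : ∀ n, f n = g n := by
  intro n
  by_contra h
  exact absurd heq (ne_of_lt (Summable.tsum_lt_tsum_of_nonneg h0 hle (lt_of_le_of_ne (hle n) h) hg))

/-- If `N(x)² = Σ pₙ(x)²` defines a norm equivalent to the given norm of the Banach
space `X`, and `N x = N y = N ((x+y)/2)`, then `pₙ x = pₙ y = pₙ ((x+y)/2)` for all `n`. -/
theorem seminorm_sum_sq_convexity
    {X : Type*} [NormedAddCommGroup X] [NormedSpace ℝ X] [CompleteSpace X]
    (p : ℕ → Seminorm ℝ X) (N : X → ℝ)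
    (hsummable : ∀ x : X, Summable fun n => (p n x) ^ 2)
    (hNnonneg : ∀ x : X, 0 ≤ N x)
    (hN : ∀ x : X, N x ^ 2 = ∑' n, (p n x) ^ 2)
    (hequiv : ∃ a b : ℝ, 0 < a ∧ 0 < b ∧ ∀ x : X, a * ‖x‖ ≤ N x ∧ N x ≤ b * ‖x‖)
    (x y : X) (hxy : N x = N y) (hmid : N x = N ((2⁻¹ : ℝ) • (x + y))) :
    ∀ n, p n x = p n y ∧ p n x = p n ((2⁻¹ : ℝ) • (x + y)) := by
  set m := (2⁻¹ : ℝ) • (x + y) with hm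
  -- pointwise bounds
  have hmle : ∀ n, p n m ≤ (p n x + p n y) / 2 := by
    intro n
    have h1 : p n m = 2⁻¹ * p n (x + y) := by
      rw [hm, map_smul_eq_mul]
      norm_num
    have h2 : p n (x + y) ≤ p n x + p n y := map_add_le_add _ _ _
    rw [h1]; linarith
  have hq_le : ∀ n, ((p n x + p n y) / 2) ^ 2 ≤ ((p n x) ^ 2 + (p n y) ^ 2) / 2 := by
    intro n; nlinarith [sq_nonneg (p n x - p n y)]
  have hm_sq_le : ∀ n, (p n m) ^ 2 ≤ ((p n x + p n y) / 2) ^ 2 := by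
    intro n
    exact pow_le_pow_left₀ (apply_nonneg _ _) (hmle n) 2
  -- summability
  have hsum_half : Summable fun n => ((p n x) ^ 2 + (p n y) ^ 2) / 2 :=
    (((hsummable x).add (hsummable y)).div_const 2)
  have hsum_q : Summable fun n => ((p n x + p n y) / 2) ^ 2 :=
    Summable.of_nonneg_of_le (fun n => sq_nonneg _) hq_le hsum_half
  -- sums
  have hhalf_sum : ∑' n, ((p n x) ^ 2 + (p n y) ^ 2) / 2 = N x ^ 2 := by
    rw [tsum_div_const, Summable.tsum_add (hsummable x) (hsummable y), ← hN x, ← hN y, ← hxy]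
    ring
  have h1 : ∑' n, (p n m) ^ 2 ≤ ∑' n, ((p n x + p n y) / 2) ^ 2 :=
    Summable.tsum_le_tsum hm_sq_le (hsummable m) hsum_q
  have h2 : ∑' n, ((p n x + p n y) / 2) ^ 2 ≤ ∑' n, ((p n x) ^ 2 + (p n y) ^ 2) / 2 :=
    Summable.tsum_le_tsum hq_le hsum_q hsum_half
  have hmsum : ∑' n, (p n m) ^ 2 = N x ^ 2 := by rw [← hN m, ← hmid]
  have e1 : ∑' n, (p n m) ^ 2 = ∑' n, ((p n x + p n y) / 2) ^ 2 := by
    have := hhalf_sum; linarith [hmsum]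
  have e2 : ∑' n, ((p n x + p n y) / 2) ^ 2 = ∑' n, ((p n x) ^ 2 + (p n y) ^ 2) / 2 := by
    linarith [hmsum, hhalf_sum]
  -- pointwise equalities
  have eq2 := tsum_le_pointwise_eq (fun n => sq_nonneg _) hq_le hsum_half e2
  have eq1 := tsum_le_pointwise_eq (fun n => sq_nonneg _) hm_sq_le hsum_q e1
  intro n
  have hxyn : p n x = p n y := by nlinarith [eq2 n, sq_nonneg (p n x - p n y)]
  constructor
  · exact hxyn
  · have hmn : p n m = (p n x + p n y) / 2 := by
      have h := eq1 n
      have := hmle n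
      nlinarith [apply_nonneg (p n) m, apply_nonneg (p n) x, apply_nonneg (p n) y]
    rw [hmn, ← hxyn]; ring
end

section
/- Let K be a compact Hausdorff space which is scattered and descriptive (i.e., K has a σ-isolated network). Then K is σ-discrete: K can be written as K = ⋃_{n∈ℕ} Dₙ where each Dₙ is discrete in its subspace topology. -/
/-- A topological space is *scattered* if every nonempty closed subset has a point
isolated in that subset. -/
def Scattered (X : Type*) [TopologicalSpace X] : Prop :=
  ∀ C : Set X, IsClosed C → C.Nonempty → ∃ x ∈ C, ∃ U : Set X, IsOpen U ∧ U ∩ C = {x}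

/-- A family of pairwise disjoint sets is *isolated* if each point of each member has an
open neighbourhood meeting no other member. -/
def IsIsolatedFamily {X : Type*} [TopologicalSpace X] (ℋ : Set (Set X)) : Prop :=
  ℋ.PairwiseDisjoint id ∧
  ∀ H ∈ ℋ, ∀ x ∈ H, ∃ U : Set X, IsOpen U ∧ x ∈ U ∧ ∀ H' ∈ ℋ, H' ≠ H → U ∩ H' = ∅

/-- `ℋ` is a *network* for `X`: every point of every open set is contained in a member of
`ℋ` included in that open set. -/
def IsNetwork {X : Type*} [TopologicalSpace X] (ℋ : Set (Set X)) : Prop :=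
  ∀ U : Set X, IsOpen U → ∀ x ∈ U, ∃ H ∈ ℋ, x ∈ H ∧ H ⊆ U

/-- A compact space is *descriptive* if it has a σ-isolated network. -/
def IsDescriptive (X : Type*) [TopologicalSpace X] : Prop :=
  ∃ ℋ : ℕ → Set (Set X), (∀ n, IsIsolatedFamily (ℋ n)) ∧ IsNetwork (⋃ n, ℋ n)

section CB

universe u
variable {K : Type u} [TopologicalSpace K]

/-- derived set of A: A minus points isolated in A -/
def derivSet (A : Set K) : Set K :=
  {x | x ∈ A ∧ ∀ U : Set K, IsOpen U → x ∈ U → U ∩ A ≠ {x}}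

theorem derivSet_subset (A : Set K) : derivSet A ⊆ A := fun _ h => h.1

theorem derivSet_closed {A : Set K} (hA : IsClosed A) : IsClosed (derivSet A) := by
  rw [← isOpen_compl_iff, isOpen_iff_forall_mem_open]
  intro x hx
  by_cases hxA : x ∈ A
  · simp only [derivSet, Set.mem_compl_iff, Set.mem_setOf_eq, not_and, not_forall] at hx
    obtain ⟨U, hU, hxU, hUA⟩ := hx hxA
    rw [not_ne_iff] at hUA
    refine ⟨U, ?_, hU, hxU⟩
    intro y hyU
    simp only [Set.mem_compl_iff, derivSet, Set.mem_setOf_eq, not_and, not_forall]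
    intro hyA
    have hyx : y = x := by
      have : y ∈ U ∩ A := ⟨hyU, hyA⟩
      rwa [hUA] at this
    subst hyx
    exact ⟨U, hU, hyU, not_ne_iff.mpr hUA⟩
  · exact ⟨Aᶜ, fun y hy h => hy (derivSet_subset A h), hA.isOpen_compl, hxA⟩

/-- the Cantor–Bendixson chain of derived sets -/
noncomputable def cbD (K : Type u) [TopologicalSpace K] : Ordinal.{u} → Set K
  | α => ⋂ β : {β : Ordinal.{u} // β < α}, derivSet (cbD K β.1)
  termination_by α => α
  decreasing_by exact β.2

theorem cbD_def (α : Ordinal.{u}) :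
    cbD K α = ⋂ β : {β : Ordinal.{u} // β < α}, derivSet (cbD K β.1) := by
  rw [cbD]

theorem cbD_subset_deriv {β α : Ordinal.{u}} (h : β < α) :
    cbD K α ⊆ derivSet (cbD K β) := by
  rw [cbD_def (K := K) α]
  exact Set.iInter_subset (fun γ : {γ : Ordinal.{u} // γ < α} => derivSet (cbD K γ.1)) ⟨β, h⟩

theorem cbD_anti {β α : Ordinal.{u}} (h : β ≤ α) : cbD K α ⊆ cbD K β := by
  rcases eq_or_lt_of_le h with rfl | h
  · exact subset_rfl
  · exact (cbD_subset_deriv h).trans (derivSet_subset _)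

theorem cbD_closed (α : Ordinal.{u}) : IsClosed (cbD K α) := by
  induction α using Ordinal.induction with
  | h α IH =>
    rw [cbD_def]
    exact isClosed_iInter fun β => derivSet_closed (IH β.1 β.2)

theorem cbD_zero : cbD K 0 = Set.univ := by
  rw [cbD_def]
  simp

/-- in a scattered space the CB chain is eventually empty -/
theorem cbD_eventually_empty (hscat : Scattered K) : ∃ α : Ordinal.{u}, cbD K α = ∅ := by
  by_contra h
  push_neg at h
  have hne : ∀ α, (cbD K α).Nonempty := h
  have hiso : ∀ α : Ordinal.{u}, ∃ x ∈ cbD K α, ∃ U : Set K, IsOpen U ∧ U ∩ cbD K α = {x} :=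
    fun α => hscat _ (cbD_closed α) (hne α)
  choose f hf U hUo hU using hiso
  have hfnd : ∀ α, f α ∉ derivSet (cbD K α) := by
    intro α hmem
    have hfU : f α ∈ U α := by
      have h3 : f α ∈ U α ∩ cbD K α := by rw [hU α]; rfl
      exact h3.1
    exact hmem.2 (U α) (hUo α) hfU (hU α)
  have hinj : Function.Injective f := by
    intro α β hab
    by_contra hne'
    rcases lt_or_gt_of_ne hne' with hlt | hlt
    · exact hfnd α (hab ▸ cbD_subset_deriv hlt (hf β))
    · exact hfnd β (hab ▸ cbD_subset_deriv hlt (hf α))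
  exact not_injective_of_ordinal f hinj

/-- every point is isolated in some level of the CB chain -/
theorem exists_cb_isolated (hscat : Scattered K) (x : K) :
    ∃ β : Ordinal.{u}, x ∈ cbD K β ∧ ∃ U : Set K, IsOpen U ∧ x ∈ U ∧ U ∩ cbD K β = {x} := by
  obtain ⟨α₁, hα₁⟩ := cbD_eventually_empty hscat
  have hSne : {α : Ordinal.{u} | x ∉ cbD K α}.Nonempty := ⟨α₁, by simp [hα₁]⟩
  set α₀ := sInf {α : Ordinal.{u} | x ∉ cbD K α} with hα₀def
  have hα₀ : x ∉ cbD K α₀ := csInf_mem hSne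
  have hmin : ∀ β < α₀, x ∈ cbD K β := by
    intro β hβ
    by_contra hmem
    have hle : α₀ ≤ β := csInf_le (OrderBot.bddBelow _) (show β ∈ {α : Ordinal.{u} | x ∉ cbD K α} from hmem)
    exact absurd hle (not_le_of_gt hβ)
  rw [cbD_def, Set.mem_iInter] at hα₀
  push_neg at hα₀
  obtain ⟨⟨β, hβ⟩, hx⟩ := hα₀
  have hxβ : x ∈ cbD K β := hmin β hβ
  refine ⟨β, hxβ, ?_⟩
  simp only [derivSet, Set.mem_setOf_eq, not_and, not_forall] at hx
  obtain ⟨V, hVo, hxV, hVeq⟩ := hx hxβ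
  exact ⟨V, hVo, hxV, not_ne_iff.mp hVeq⟩

end CB

/-- A scattered descriptive compact Hausdorff space is σ-discrete. -/
theorem scattered_descriptive_sigmaDiscrete
    {K : Type*} [TopologicalSpace K] [CompactSpace K] [T2Space K]
    (hscat : Scattered K) (hdesc : IsDescriptive K) :
    ∃ D : ℕ → Set K, (⋃ n, D n) = Set.univ ∧
      ∀ n, ∀ x ∈ D n, ∃ U : Set K, IsOpen U ∧ U ∩ D n = {x} := by
  obtain ⟨ℋ, hiso, hnet⟩ := hdesc
  -- rank, isolating neighbourhood
  choose r hr U hUo hxU hU using exists_cb_isolated hscat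
  -- network member inside U x
  have hnet' : ∀ x : K, ∃ n : ℕ, ∃ H ∈ ℋ n, x ∈ H ∧ H ⊆ U x := by
    intro x
    obtain ⟨H, hH, hxH, hHU⟩ := hnet (U x) (hUo x) x (hxU x)
    rw [Set.mem_iUnion] at hH
    obtain ⟨n, hn⟩ := hH
    exact ⟨n, H, hn, hxH, hHU⟩
  choose n H hH hxH hHU using hnet'
  refine ⟨fun m => {x | n x = m}, ?_, ?_⟩
  · ext x
    simp only [Set.mem_iUnion, Set.mem_setOf_eq, Set.mem_univ, iff_true]
    exact ⟨n x, rfl⟩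
  · rintro m x hx
    simp only [Set.mem_setOf_eq] at hx
    obtain ⟨V, hVo, hxV, hV⟩ := (hiso m).2 (H x) (hx ▸ hH x) x (hxH x)
    refine ⟨U x ∩ V, (hUo x).inter hVo, ?_⟩
    apply Set.eq_singleton_iff_unique_mem.mpr
    refine ⟨⟨⟨hxU x, hxV⟩, hx⟩, ?_⟩
    rintro y ⟨⟨hyU, hyV⟩, hy⟩
    simp only [Set.mem_setOf_eq] at hy
    -- H y = H x
    have hHy : H y = H x := by
      by_contra hne
      have : V ∩ H y = ∅ := hV (H y) (hy ▸ hH y) hne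
      exact absurd this (Set.nonempty_iff_ne_empty.mp ⟨y, hyV, hxH y⟩)
    have hxUy : x ∈ U y := hHU y (hHy ▸ hxH x)
    rcases le_total (r y) (r x) with hle | hle
    · have : x ∈ U y ∩ cbD K (r y) := ⟨hxUy, cbD_anti hle (hr x)⟩
      rw [hU y] at this
      exact this.symm
    · have : y ∈ U x ∩ cbD K (r x) := ⟨hyU, cbD_anti hle (hr y)⟩
      rw [hU x] at this
      exact this
end

section
/- Let X be a regular topological space and let ℋ = ⋃_{n∈ℕ} ℋₙ be a network for X where each ℋₙ is an isolated family. For each n ∈ ℕ set Aₙ = closure(⋃ℋₙ) and, for H ∈ ℋₙ, set U_H = X \ closure(⋃(ℋₙ \ {H})). Then each family 𝒢ₙ = {Aₙ ∩ U_H : H ∈ ℋₙ} is isolated (indeed consists of pairwise disjoint sets, each relatively open in the closed set Aₙ), and 𝒢 = ⋃_{n∈ℕ} 𝒢ₙ is a network for X. -/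
section aux
variable {X : Type*} [TopologicalSpace X]

/-- Key fact: `Aₙ ∩ U_H ⊆ closure H`. -/
lemma manicure_sub {𝒦 : Set (Set X)} {H : Set X} (hH : H ∈ 𝒦) :
    closure (⋃₀ 𝒦) ∩ (closure (⋃₀ (𝒦 \ {H})))ᶜ ⊆ closure H := by
  have h1 : ⋃₀ 𝒦 ⊆ ⋃₀ (𝒦 \ {H}) ∪ H := by
    rintro x ⟨K, hK, hxK⟩
    by_cases hKH : K = H
    · exact Or.inr (hKH ▸ hxK)
    · exact Or.inl ⟨K, ⟨hK, hKH⟩, hxK⟩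
  have h2 : closure (⋃₀ 𝒦) ⊆ closure (⋃₀ (𝒦 \ {H})) ∪ closure H := by
    calc closure (⋃₀ 𝒦) ⊆ closure (⋃₀ (𝒦 \ {H}) ∪ H) := closure_mono h1
      _ = _ := closure_union
  rintro x ⟨hx, hx'⟩
  rcases h2 hx with h | h
  · exact absurd h hx'
  · exact h

lemma manicure_ne {𝒦 : Set (Set X)} {H H' : Set X} (hH : H ∈ 𝒦) (hne : H ≠ H') :
    closure H ⊆ closure (⋃₀ (𝒦 \ {H'})) :=
  closure_mono fun x hx => ⟨H, ⟨hH, hne⟩, hx⟩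

end aux

/-- The "manicure" lemma: in a regular space, a σ-isolated network may be replaced by a
σ-isolated network whose members are of the form (closed set) ∩ (open set). -/
theorem manicure_network
    {X : Type*} [TopologicalSpace X] [RegularSpace X]
    (ℋ : ℕ → Set (Set X))
    (hiso : ∀ n, IsIsolatedFamily (ℋ n))
    (hnet : IsNetwork (⋃ n, ℋ n)) :
    (∀ n, IsClosed (closure (⋃₀ ℋ n))) ∧
    (∀ n, ∀ H ∈ ℋ n, IsOpen (closure (⋃₀ (ℋ n \ {H})))ᶜ) ∧
    (∀ n, IsIsolatedFamily
      ((fun H => closure (⋃₀ ℋ n) ∩ (closure (⋃₀ (ℋ n \ {H})))ᶜ) '' ℋ n)) ∧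
    IsNetwork (⋃ n,
      (fun H => closure (⋃₀ ℋ n) ∩ (closure (⋃₀ (ℋ n \ {H})))ᶜ) '' ℋ n) := by
  refine ⟨fun n => isClosed_closure, fun n H _ => isClosed_closure.isOpen_compl, ?_, ?_⟩
  · -- isolated
    intro n
    constructor
    · rintro _ ⟨H, hH, rfl⟩ _ ⟨H', hH', rfl⟩ hne
      have hHH' : H ≠ H' := by rintro rfl; exact hne rfl
      refine Set.disjoint_left.2 fun x hx hx' => ?_
      have h1 : x ∈ closure H := manicure_sub hH hx
      have h2 : x ∈ closure (⋃₀ (ℋ n \ {H'})) := manicure_ne hH hHH' h1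
      exact hx'.2 h2
    · rintro _ ⟨H, hH, rfl⟩ x hx
      refine ⟨(closure (⋃₀ (ℋ n \ {H})))ᶜ, isClosed_closure.isOpen_compl, hx.2, ?_⟩
      rintro _ ⟨H', hH', rfl⟩ hne
      have hHH' : H' ≠ H := by rintro rfl; exact hne rfl
      ext y
      simp only [Set.mem_inter_iff, Set.mem_empty_iff_false, iff_false, not_and]
      intro hy hy1 hy2
      exact hy (manicure_ne hH' hHH' (manicure_sub hH' ⟨hy1, hy2⟩))
  · -- network
    intro U hU x hxU
    -- regularity: get closed nbhd inside U
    obtain ⟨t, ht_nhds, ht_closed, htU⟩ := exists_mem_nhds_isClosed_subset (hU.mem_nhds hxU)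
    have hxt : x ∈ interior t := mem_interior_iff_mem_nhds.2 ht_nhds
    obtain ⟨H, hHmem, hxH, hHsub⟩ := hnet (interior t) isOpen_interior x hxt
    obtain ⟨n, hHn⟩ := Set.mem_iUnion.1 hHmem
    refine ⟨_, Set.mem_iUnion.2 ⟨n, ⟨H, hHn, rfl⟩⟩, ⟨?_, ?_⟩, ?_⟩
    · exact subset_closure ⟨H, hHn, hxH⟩
    · -- x ∉ closure(⋃(ℋₙ \ {H})) using isolation
      obtain ⟨W, hWopen, hxW, hW⟩ := (hiso n).2 H hHn x hxH
      intro hxc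
      have : W ∩ ⋃₀ (ℋ n \ {H}) = ∅ := by
        ext y
        simp only [Set.mem_inter_iff, Set.mem_empty_iff_false, iff_false, not_and]
        rintro hyW ⟨K, ⟨hK, hKne⟩, hyK⟩
        have := hW K hK hKne
        exact absurd (Set.eq_empty_iff_forall_notMem.1 this y ⟨hyW, hyK⟩) id
      have hdisj : Disjoint W (⋃₀ (ℋ n \ {H})) := Set.disjoint_iff_inter_eq_empty.2 this
      have : x ∉ closure (⋃₀ (ℋ n \ {H})) := by
        rw [mem_closure_iff]
        push_neg
        exact ⟨W, hWopen, hxW, this⟩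
      exact this hxc
    · -- the new set is contained in U
      calc closure (⋃₀ ℋ n) ∩ (closure (⋃₀ (ℋ n \ {H})))ᶜ
          ⊆ closure H := manicure_sub hHn
        _ ⊆ closure (interior t) := closure_mono hHsub
        _ ⊆ closure t := closure_mono interior_subset
        _ = t := ht_closed.closure_eq
        _ ⊆ U := htU
end

section
/- For a topological space X the following are equivalent: (i) X is Gruenhage; (ii) there exist closed sets Aₙ ⊆ X and families ℋₙ of pairwise disjoint sets, each relatively open in Aₙ (n ∈ ℕ), such that ⋃_{n∈ℕ} ℋₙ separates points of X; (iii) there exist open sets Rₙ ⊆ X and families 𝒰ₙ of open subsets of X (n ∈ ℕ) such that Rₙ ⊆ U for every U ∈ 𝒰ₙ, U ∩ V = Rₙ whenever U, V ∈ 𝒰ₙ are distinct, and ⋃_{n∈ℕ} 𝒰ₙ separates points of X. -/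
/-- A family of sets *separates points* if for distinct `x, y` some member contains
exactly one of them. -/
def SepPoints {X : Type*} (𝒱 : Set (Set X)) : Prop :=
  ∀ x y : X, x ≠ y → ∃ V ∈ 𝒱, Xor' (x ∈ V) (y ∈ V)

private lemma xor_symm' {a b : Prop} (h : Xor' a b) : Xor' b a :=
  h.elim (fun ⟨ha, hb⟩ => Or.inr ⟨ha, hb⟩) (fun ⟨hb, ha⟩ => Or.inl ⟨hb, ha⟩)

/-- (i) ⇒ (ii) -/
private lemma gruenhage_to_two {X : Type*} [TopologicalSpace X] (h : IsGruenhage X) :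
    ∃ (A : ℕ → Set X) (ℋ : ℕ → Set (Set X)),
      (∀ n, IsClosed (A n)) ∧
      (∀ n, (ℋ n).PairwiseDisjoint id) ∧
      (∀ n, ∀ H ∈ ℋ n, ∃ V : Set X, IsOpen V ∧ H = A n ∩ V) ∧
      SepPoints (⋃ n, ℋ n) := by
  classical
  obtain ⟨𝒰, hop, hsep⟩ := h
  -- A n k : points lying in at most k members of 𝒰 n
  set A : ℕ → ℕ → Set X := fun n k =>
    {x | ∀ s : Finset (Set X), (∀ U ∈ s, U ∈ 𝒰 n ∧ x ∈ U) → s.card ≤ k} with hA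
  have hAclosed : ∀ n k, IsClosed (A n k) := by
    intro n k
    rw [← isOpen_compl_iff, isOpen_iff_mem_nhds]
    intro x hx
    simp only [hA, Set.mem_compl_iff, Set.mem_setOf_eq, not_forall] at hx
    obtain ⟨s, hs, hcard⟩ := hx
    have hopen : IsOpen (⋂₀ (↑s : Set (Set X))) := by
      apply Set.Finite.isOpen_sInter s.finite_toSet
      intro U hU
      exact hop n U ((hs U hU).1)
    refine Filter.mem_of_superset (hopen.mem_nhds ?_) ?_
    · exact fun U hU => (hs U hU).2
    · intro z hz
      simp only [Set.mem_compl_iff, hA, Set.mem_setOf_eq, not_forall]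
      exact ⟨s, fun U hU => ⟨(hs U hU).1, hz U hU⟩, hcard⟩
  set ℋ : ℕ → ℕ → Set (Set X) := fun n k =>
    {H | ∃ s : Finset (Set X), (∀ U ∈ s, U ∈ 𝒰 n) ∧ s.card = k ∧ H = A n k ∩ ⋂₀ ↑s}
    with hℋ
  have hdisj : ∀ n k, (ℋ n k).PairwiseDisjoint id := by
    intro n k H hH H' hH' hne
    obtain ⟨s, hs, hsc, rfl⟩ := hH
    obtain ⟨s', hs', hsc', rfl⟩ := hH'
    have hss : s ≠ s' := by rintro rfl; exact hne rfl
    rw [Function.onFun, Set.disjoint_left]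
    rintro x ⟨hxA, hxs⟩ ⟨_, hxs'⟩
    have hsub : s ⊂ s ∪ s' := by
      refine Finset.ssubset_iff_of_subset Finset.subset_union_left |>.mpr ?_
      by_contra hc
      push_neg at hc
      have : s' ⊆ s := fun U hU => by
        by_contra hUs
        exact hUs (hc U (Finset.mem_union_right _ hU))
      exact hss (Finset.eq_of_subset_of_card_le this (le_of_eq (hsc.trans hsc'.symm))).symm
    have hcard : k < (s ∪ s').card := hsc ▸ Finset.card_lt_card hsub
    have := hxA (s ∪ s') (fun U hU => by
      rcases Finset.mem_union.mp hU with h' | h'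
      · exact ⟨hs U h', hxs U h'⟩
      · exact ⟨hs' U h', hxs' U h'⟩)
    omega
  have hrel : ∀ n k, ∀ H ∈ ℋ n k, ∃ V : Set X, IsOpen V ∧ H = A n k ∩ V := by
    intro n k H hH
    obtain ⟨s, hs, _, rfl⟩ := hH
    exact ⟨⋂₀ ↑s, Set.Finite.isOpen_sInter s.finite_toSet (fun U hU => hop n U (hs U hU)),
      rfl⟩
  -- key separation step
  have key : ∀ x y : X, ∀ n, (∃ U ∈ 𝒰 n, Xor' (x ∈ U) (y ∈ U)) →
      {U ∈ 𝒰 n | x ∈ U}.Finite → ∃ k, ∃ H ∈ ℋ n k, x ∈ H ∧ y ∉ H := by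
    intro x y n ⟨U, hU, hxor⟩ hfin
    set F := hfin.toFinset with hF
    have hFmem : ∀ V, V ∈ F ↔ (V ∈ 𝒰 n ∧ x ∈ V) := by
      intro V
      rw [hF, Set.Finite.mem_toFinset]; rfl
    refine ⟨F.card, A n F.card ∩ ⋂₀ ↑F, ⟨F, fun V hV => (hFmem V |>.mp hV).1, rfl, rfl⟩,
      ⟨?_, ?_⟩, ?_⟩
    · intro s hsmem
      refine Finset.card_le_card (fun V hV => ?_)
      exact (hFmem V).mpr (hsmem V hV)
    · intro V hV
      exact ((hFmem V).mp hV).2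
    · rintro ⟨hyA, hys⟩
      have hyF : ∀ V ∈ F, y ∈ V := fun V hV => hys V hV
      rcases hxor with ⟨hxU, hyU⟩ | ⟨hyU, hxU⟩
      · exact hyU (hyF U ((hFmem U).mpr ⟨hU, hxU⟩))
      · have hUF : U ∉ F := fun hc => hxU ((hFmem U).mp hc).2
        have := hyA (insert U F) (fun V hV => by
          rcases Finset.mem_insert.mp hV with rfl | h'
          · exact ⟨hU, hyU⟩
          · exact ⟨((hFmem V).mp h').1, hyF V h'⟩)
        rw [Finset.card_insert_of_notMem hUF] at this
        omega
  refine ⟨fun m => A m.unpair.1 m.unpair.2, fun m => ℋ m.unpair.1 m.unpair.2,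
    fun m => hAclosed _ _, fun m => hdisj _ _, fun m => hrel _ _, ?_⟩
  intro x y hxy
  obtain ⟨n, hwit, hfin⟩ := hsep x y hxy
  rcases hfin with hfin | hfin
  · obtain ⟨k, H, hH, hxH, hyH⟩ := key x y n hwit hfin
    refine ⟨H, Set.mem_iUnion.mpr ⟨Nat.pair n k, ?_⟩, Or.inl ⟨hxH, hyH⟩⟩
    simp only [Nat.unpair_pair]; exact hH
  · obtain ⟨U, hU, hxor⟩ := hwit
    obtain ⟨k, H, hH, hyH, hxH⟩ := key y x n ⟨U, hU, xor_symm' hxor⟩ hfin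
    refine ⟨H, Set.mem_iUnion.mpr ⟨Nat.pair n k, ?_⟩, Or.inr ⟨hyH, hxH⟩⟩
    simp only [Nat.unpair_pair]; exact hH

/-- (ii) ⇒ (iii) -/
private lemma two_to_three {X : Type*} [TopologicalSpace X]
    (h : ∃ (A : ℕ → Set X) (ℋ : ℕ → Set (Set X)),
      (∀ n, IsClosed (A n)) ∧
      (∀ n, (ℋ n).PairwiseDisjoint id) ∧
      (∀ n, ∀ H ∈ ℋ n, ∃ V : Set X, IsOpen V ∧ H = A n ∩ V) ∧
      SepPoints (⋃ n, ℋ n)) :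
    ∃ (R : ℕ → Set X) (𝒰 : ℕ → Set (Set X)),
      (∀ n, IsOpen (R n)) ∧
      (∀ n, ∀ U ∈ 𝒰 n, IsOpen U) ∧
      (∀ n, ∀ U ∈ 𝒰 n, R n ⊆ U) ∧
      (∀ n, ∀ U ∈ 𝒰 n, ∀ V ∈ 𝒰 n, U ≠ V → U ∩ V = R n) ∧
      SepPoints (⋃ n, 𝒰 n) := by
  classical
  obtain ⟨A, ℋ, hcl, hdisj, hrel, hsep⟩ := h
  -- choose the relatively-open witness
  set v : ℕ → Set X → Set X := fun n H =>
    if hx : ∃ V : Set X, IsOpen V ∧ H = A n ∩ V then hx.choose else ∅ with hv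
  have hvspec : ∀ n, ∀ H ∈ ℋ n, IsOpen (v n H) ∧ H = A n ∩ v n H := by
    intro n H hH
    have hx := hrel n H hH
    rw [hv]; simp only [dif_pos hx]
    exact hx.choose_spec
  set R : ℕ → Set X := fun m => if m % 2 = 0 then (A (m / 2))ᶜ else ∅ with hR
  set 𝒰 : ℕ → Set (Set X) := fun m =>
    if m % 2 = 0 then (fun H => (A (m / 2))ᶜ ∪ v (m / 2) H) '' ℋ (m / 2)
    else {(A (m / 2))ᶜ} with h𝒰
  refine ⟨R, 𝒰, ?_, ?_, ?_, ?_, ?_⟩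
  · intro m
    simp only [hR]
    split_ifs
    · exact (hcl _).isOpen_compl
    · exact isOpen_empty
  · intro m U hU
    simp only [h𝒰] at hU
    split_ifs at hU
    · obtain ⟨H, hH, rfl⟩ := hU
      exact ((hcl _).isOpen_compl).union (hvspec _ H hH).1
    · rw [Set.mem_singleton_iff] at hU
      exact hU ▸ (hcl _).isOpen_compl
  · intro m U hU
    simp only [h𝒰] at hU; simp only [hR]
    split_ifs at hU ⊢ with hm
    · obtain ⟨H, hH, rfl⟩ := hU
      exact Set.subset_union_left
    · exact Set.empty_subset _
  · intro m U hU V hV hUV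
    simp only [h𝒰] at hU hV; simp only [hR]
    split_ifs at hU hV ⊢ with hm
    · obtain ⟨H, hH, rfl⟩ := hU
      obtain ⟨H', hH', rfl⟩ := hV
      have hne : H ≠ H' := by rintro rfl; exact hUV rfl
      apply Set.Subset.antisymm
      · rintro z ⟨hz1, hz2⟩
        by_contra hzA
        rw [Set.mem_compl_iff, not_not] at hzA
        have hz1' : z ∈ v (m / 2) H := by
          rcases hz1 with h' | h'
          · exact absurd hzA h'
          · exact h'
        have hz2' : z ∈ v (m / 2) H' := by
          rcases hz2 with h' | h'
          · exact absurd hzA h'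
          · exact h'
        have hzH : z ∈ H := (hvspec _ H hH).2 ▸ ⟨hzA, hz1'⟩
        have hzH' : z ∈ H' := (hvspec _ H' hH').2 ▸ ⟨hzA, hz2'⟩
        exact Set.disjoint_left.mp (hdisj _ hH hH' hne) hzH hzH'
      · exact fun z hz => ⟨Or.inl hz, Or.inl hz⟩
    · rw [Set.mem_singleton_iff] at hU hV
      exact absurd (hU.trans hV.symm) hUV
  · -- separation
    have key : ∀ x y : X, ∀ n, ∀ H ∈ ℋ n, x ∈ H → y ∉ H →
        ∃ W ∈ ⋃ m, 𝒰 m, x ∈ W ∧ y ∉ W ∨ y ∈ W ∧ x ∉ W := by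
      intro x y n H hH hxH hyH
      have hHeq := (hvspec n H hH).2
      have hxA : x ∈ A n := (hHeq ▸ hxH).1
      have hxv : x ∈ v n H := (hHeq ▸ hxH).2
      by_cases hyA : y ∈ A n
      · -- use the index 2*n family of the first kind
        refine ⟨(A n)ᶜ ∪ v n H, Set.mem_iUnion.mpr ⟨2 * n, ?_⟩, Or.inl ⟨Or.inr hxv, ?_⟩⟩
        · simp only [h𝒰]
          have h2 : (2 * n) % 2 = 0 := by omega
          have h3 : (2 * n) / 2 = n := by omega
          rw [if_pos h2, h3]
          exact ⟨H, hH, rfl⟩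
        · rintro (h' | h')
          · exact h' hyA
          · exact hyH (hHeq ▸ ⟨hyA, h'⟩)
      · -- use the index 2*n+1 singleton family
        refine ⟨(A n)ᶜ, Set.mem_iUnion.mpr ⟨2 * n + 1, ?_⟩,
          Or.inr ⟨hyA, fun hc => hc hxA⟩⟩
        simp only [h𝒰]
        have h2 : (2 * n + 1) % 2 ≠ 0 := by omega
        have h3 : (2 * n + 1) / 2 = n := by omega
        rw [if_neg h2, h3]
        rfl
    intro x y hxy
    obtain ⟨H, hHmem, hxor⟩ := hsep x y hxy
    obtain ⟨n, hH⟩ := Set.mem_iUnion.mp hHmem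
    rcases hxor with ⟨hxH, hyH⟩ | ⟨hyH, hxH⟩
    · obtain ⟨W, hW, hc⟩ := key x y n H hH hxH hyH
      exact ⟨W, hW, hc⟩
    · obtain ⟨W, hW, hc⟩ := key y x n H hH hyH hxH
      exact ⟨W, hW, hc.symm⟩

/-- (iii) ⇒ (i) -/
private lemma three_to_gruenhage {X : Type*} [TopologicalSpace X]
    (h : ∃ (R : ℕ → Set X) (𝒰 : ℕ → Set (Set X)),
      (∀ n, IsOpen (R n)) ∧
      (∀ n, ∀ U ∈ 𝒰 n, IsOpen U) ∧
      (∀ n, ∀ U ∈ 𝒰 n, R n ⊆ U) ∧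
      (∀ n, ∀ U ∈ 𝒰 n, ∀ V ∈ 𝒰 n, U ≠ V → U ∩ V = R n) ∧
      SepPoints (⋃ n, 𝒰 n)) : IsGruenhage X := by
  obtain ⟨R, 𝒰, _, hop, hRsub, hint, hsep⟩ := h
  refine ⟨𝒰, hop, ?_⟩
  intro x y hxy
  obtain ⟨U, hUmem, hxor⟩ := hsep x y hxy
  obtain ⟨n, hU⟩ := Set.mem_iUnion.mp hUmem
  -- if z ∉ R n then z lies in at most one member of 𝒰 n
  have hsub : ∀ z : X, z ∉ R n → {V ∈ 𝒰 n | z ∈ V}.Subsingleton := by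
    intro z hz V ⟨hV, hzV⟩ V' ⟨hV', hzV'⟩
    by_contra hne
    exact hz ((hint n V hV V' hV' hne) ▸ ⟨hzV, hzV'⟩)
  refine ⟨n, ⟨U, hU, hxor⟩, ?_⟩
  rcases hxor with ⟨_, hyU⟩ | ⟨_, hxU⟩
  · exact Or.inr ((hsub y (fun hc => hyU (hRsub n U hU hc))).finite)
  · exact Or.inl ((hsub x (fun hc => hxU (hRsub n U hU hc))).finite)

/-- Equivalent formulations of the Gruenhage property. -/
theorem isGruenhage_iff_formulations {X : Type*} [TopologicalSpace X] :
    (IsGruenhage X ↔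
      ∃ (A : ℕ → Set X) (ℋ : ℕ → Set (Set X)),
        (∀ n, IsClosed (A n)) ∧
        (∀ n, (ℋ n).PairwiseDisjoint id) ∧
        (∀ n, ∀ H ∈ ℋ n, ∃ V : Set X, IsOpen V ∧ H = A n ∩ V) ∧
        SepPoints (⋃ n, ℋ n)) ∧
    (IsGruenhage X ↔
      ∃ (R : ℕ → Set X) (𝒰 : ℕ → Set (Set X)),
        (∀ n, IsOpen (R n)) ∧
        (∀ n, ∀ U ∈ 𝒰 n, IsOpen U) ∧
        (∀ n, ∀ U ∈ 𝒰 n, R n ⊆ U) ∧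
        (∀ n, ∀ U ∈ 𝒰 n, ∀ V ∈ 𝒰 n, U ≠ V → U ∩ V = R n) ∧
        SepPoints (⋃ n, 𝒰 n)) := by
  constructor
  · exact ⟨gruenhage_to_two, fun h => three_to_gruenhage (two_to_three h)⟩
  · exact ⟨fun h => two_to_three (gruenhage_to_two h), three_to_gruenhage⟩
end

section
/- Every descriptive compact space is Gruenhage: if K is a compact Hausdorff space admitting a σ-isolated network, then K is Gruenhage. -/
/-- Every descriptive compact Hausdorff space (one admitting a σ-isolated network)
is Gruenhage. -/
theorem descriptive_compact_isGruenhage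
    {K : Type*} [TopologicalSpace K] [CompactSpace K] [T2Space K]
    (ℋ : ℕ → Set (Set K))
    (hiso : ∀ n, IsIsolatedFamily (ℋ n))
    (hnet : IsNetwork (⋃ n, ℋ n)) :
    IsGruenhage K := by
  classical
  have hsep : ∀ n, ∀ H ∈ ℋ n, ∀ x ∈ H, ∃ U : Set K,
      IsOpen U ∧ x ∈ U ∧ ∀ H' ∈ ℋ n, H' ≠ H → U ∩ H' = ∅ := fun n => (hiso n).2
  choose! U hUopen hxU hUdisj using hsep
  -- the open "swelling" of each member of the family
  set W : ℕ → Set K → Set K :=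
    fun n H => ⋃ (x : K) (_ : H ∈ ℋ n) (_ : x ∈ H), U n H x with hWdef
  have hWopen : ∀ n H, IsOpen (W n H) := by
    intro n H
    exact isOpen_iUnion fun x => isOpen_iUnion fun hH => isOpen_iUnion fun hx =>
      hUopen n H hH x hx
  have hsubW : ∀ n H, H ∈ ℋ n → H ⊆ W n H := by
    intro n H hH x hx
    exact Set.mem_iUnion.2 ⟨x, Set.mem_iUnion.2 ⟨hH, Set.mem_iUnion.2 ⟨hx, hxU n H hH x hx⟩⟩⟩
  have hWdisj : ∀ n H, H ∈ ℋ n → ∀ H' ∈ ℋ n, H' ≠ H → ∀ z ∈ W n H, z ∉ H' := by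
    intro n H hH H' hH' hne z hz hz'
    rcases Set.mem_iUnion.1 hz with ⟨x, hx⟩
    rcases Set.mem_iUnion.1 hx with ⟨hHmem, hx'⟩
    rcases Set.mem_iUnion.1 hx' with ⟨hxH, hzU⟩
    have := hUdisj n H hHmem x hxH H' hH' hne
    exact absurd (Set.mem_inter hzU hz') (by simp [this])
  refine ⟨fun n => {V | ∃ H ∈ ℋ n, V = W n H ∨ V = W n H \ closure H}, ?_, ?_⟩
  · rintro n V ⟨H, hH, rfl | rfl⟩
    · exact hWopen n H
    · exact (hWopen n H).sdiff isClosed_closure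
  · intro x y hxy
    -- separate x from closure of a small open set around x
    obtain ⟨u, v, hu, hv, hxu, hyv, huv⟩ := t2_separation hxy
    have hyclu : y ∉ closure u := by
      intro hy
      have : v ∩ closure u ⊆ closure (v ∩ u) := hv.inter_closure
      have h0 : v ∩ u = ∅ := Set.disjoint_iff_inter_eq_empty.1 huv.symm
      have := this ⟨hyv, hy⟩
      rw [h0, closure_empty] at this
      exact this
    obtain ⟨H, hHmem, hxH, hHu⟩ := hnet u hu x hxu
    rcases Set.mem_iUnion.1 hHmem with ⟨n, hHn⟩
    have hyclH : y ∉ closure H := fun h => hyclu (closure_mono hHu h)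
    have hxclH : x ∈ closure H := subset_closure hxH
    refine ⟨n, ?_, Or.inl ?_⟩
    · by_cases hyW : y ∈ W n H
      · refine ⟨W n H \ closure H, ⟨H, hHn, Or.inr rfl⟩, Or.inr ⟨⟨hyW, hyclH⟩, ?_⟩⟩
        rintro ⟨-, hxc⟩; exact hxc hxclH
      · exact ⟨W n H, ⟨H, hHn, Or.inl rfl⟩,
          Or.inl ⟨hsubW n H hHn hxH, hyW⟩⟩
    · -- x belongs to at most the set W n H among this family
      apply Set.Finite.subset (Set.finite_singleton (W n H))
      rintro V ⟨⟨H', hH', hV⟩, hxV⟩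
      have hH'eq : H' = H := by
        by_contra hne
        have hxW : x ∈ W n H' := by
          rcases hV with rfl | rfl
          · exact hxV
          · exact hxV.1
        exact hWdisj n H' hH' H hHn (Ne.symm hne) x hxW hxH
      subst hH'eq
      rcases hV with rfl | rfl
      · rfl
      · exact absurd hxclH hxV.2
end

section
/- Let X be a topological space whose cardinality is at most the continuum 2^ℵ₀. Then X is Gruenhage if and only if there is a countable family of open subsets of X that separates points (for all distinct x, y ∈ X some member of the family contains exactly one of x and y). -/
section GruenhageAux

set_option linter.unusedSectionVars false

variable {X : Type*} [TopologicalSpace X]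

/-- The family of members of `𝒰 n` containing `x`. -/
private def gF (𝒰 : ℕ → Set (Set X)) (n : ℕ) (x : X) : Set (Set X) :=
  {U ∈ 𝒰 n | x ∈ U}

private lemma self_mem_sInter_gF (𝒰 : ℕ → Set (Set X)) (n : ℕ) (x : X) :
    x ∈ ⋂₀ gF 𝒰 n x := fun _ hU => hU.2

private lemma mem_sInter_gF_iff (𝒰 : ℕ → Set (Set X)) (n : ℕ) (x z : X) :
    z ∈ ⋂₀ gF 𝒰 n x ↔ gF 𝒰 n x ⊆ gF 𝒰 n z := by
  constructor
  · intro hz U hU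
    exact ⟨hU.1, hz U hU⟩
  · intro hsub U hU
    exact (hsub hU).2

/-- Labelling of classes by binary sequences via chosen representatives. -/
private noncomputable def gphi (𝒰 : ℕ → Set (Set X)) (c : X → ℕ → Bool) (n : ℕ)
    (S : Set (Set X)) : ℕ → Bool :=
  @dite _ (∃ p, gF 𝒰 n p = S) (Classical.propDecidable _) (fun h => c h.choose)
    (fun _ _ => false)

private lemma gphi_ne (𝒰 : ℕ → Set (Set X)) (c : X → ℕ → Bool) (hc : Function.Injective c)
    (n : ℕ) (x y : X) (hne : gF 𝒰 n x ≠ gF 𝒰 n y) :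
    gphi 𝒰 c n (gF 𝒰 n x) ≠ gphi 𝒰 c n (gF 𝒰 n y) := by
  have hx : ∃ p, gF 𝒰 n p = gF 𝒰 n x := ⟨x, rfl⟩
  have hy : ∃ p, gF 𝒰 n p = gF 𝒰 n y := ⟨y, rfl⟩
  simp only [gphi, dif_pos hx, dif_pos hy]
  intro h
  exact hne (hx.choose_spec ▸ hy.choose_spec ▸ congrArg (gF 𝒰 n) (hc h))

private def gG (𝒰 : ℕ → Set (Set X)) (n k : ℕ) : Set X :=
  ⋃ (x' : X) (_ : (gF 𝒰 n x').Finite ∧ (gF 𝒰 n x').ncard = k), ⋂₀ gF 𝒰 n x'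

private def gH (𝒰 : ℕ → Set (Set X)) (n k : ℕ) : Set X :=
  ⋃ (x' : X) (U' : Set X)
    (_ : (gF 𝒰 n x').Finite ∧ (gF 𝒰 n x').ncard = k ∧ U' ∈ 𝒰 n ∧ U' ∉ gF 𝒰 n x'),
    (⋂₀ gF 𝒰 n x' ∩ U')

private noncomputable def gW (𝒰 : ℕ → Set (Set X)) (c : X → ℕ → Bool) (n k m : ℕ) : Set X :=
  ⋃ (x' : X)
    (_ : (gF 𝒰 n x').Finite ∧ (gF 𝒰 n x').ncard = k ∧ gphi 𝒰 c n (gF 𝒰 n x') m = true),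
    ⋂₀ gF 𝒰 n x'

private lemma isOpen_sInter_gF (𝒰 : ℕ → Set (Set X)) (hop : ∀ n, ∀ U ∈ 𝒰 n, IsOpen U)
    (n : ℕ) (x : X) (hfin : (gF 𝒰 n x).Finite) : IsOpen (⋂₀ gF 𝒰 n x) :=
  hfin.isOpen_sInter fun _ hU => hop n _ hU.1

private lemma notMem_gH (𝒰 : ℕ → Set (Set X)) (n k : ℕ) (x : X)
    (hfin : (gF 𝒰 n x).Finite) (hk : (gF 𝒰 n x).ncard = k) : x ∉ gH 𝒰 n k := by
  intro hx
  simp only [gH, Set.mem_iUnion, Set.mem_inter_iff] at hx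
  obtain ⟨x', U', ⟨hf', hk', hU𝒰, hU'⟩, hx1, hx2⟩ := hx
  have hsub : insert U' (gF 𝒰 n x') ⊆ gF 𝒰 n x := by
    rintro V (rfl | hV)
    · exact ⟨hU𝒰, hx2⟩
    · exact ⟨hV.1, hx1 V hV⟩
  have h1 : (insert U' (gF 𝒰 n x')).ncard = k + 1 := by
    rw [Set.ncard_insert_of_notMem hU' hf', hk']
  have h2 := Set.ncard_le_ncard hsub hfin
  omega

private lemma mem_gW_iff (𝒰 : ℕ → Set (Set X)) (c : X → ℕ → Bool) (n k m : ℕ) (x : X)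
    (hfin : (gF 𝒰 n x).Finite) (hk : (gF 𝒰 n x).ncard = k) :
    x ∈ gW 𝒰 c n k m ↔ gphi 𝒰 c n (gF 𝒰 n x) m = true := by
  constructor
  · intro hx
    simp only [gW, Set.mem_iUnion] at hx
    obtain ⟨x', ⟨hf', hk', hb'⟩, hx1⟩ := hx
    have hsub : gF 𝒰 n x' ⊆ gF 𝒰 n x := (mem_sInter_gF_iff 𝒰 n x' x).mp hx1
    have heq : gF 𝒰 n x' = gF 𝒰 n x :=
      Set.eq_of_subset_of_ncard_le hsub (by rw [hk, hk']) hfin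
    rwa [heq] at hb'
  · intro hb
    simp only [gW, Set.mem_iUnion]
    exact ⟨x, ⟨hfin, hk, hb⟩, self_mem_sInter_gF 𝒰 n x⟩

/-- The key separation lemma: if `x`'s family at level `n` is finite and some member of `𝒰 n`
separates `x` and `y`, then one of the countably many auxiliary open sets separates them. -/
private lemma gkey (𝒰 : ℕ → Set (Set X)) (c : X → ℕ → Bool) (hc : Function.Injective c)
    (n : ℕ) (x y : X) (hfin : (gF 𝒰 n x).Finite)
    (hsep : ∃ U ∈ 𝒰 n, Xor' (x ∈ U) (y ∈ U)) :
    (∃ k, Xor' (x ∈ gG 𝒰 n k) (y ∈ gG 𝒰 n k)) ∨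
    (∃ k, Xor' (x ∈ gH 𝒰 n k) (y ∈ gH 𝒰 n k)) ∨
    (∃ k m, Xor' (x ∈ gW 𝒰 c n k m) (y ∈ gW 𝒰 c n k m)) := by
  set k := (gF 𝒰 n x).ncard with hkdef
  have hxnotH : x ∉ gH 𝒰 n k := notMem_gH 𝒰 n k x hfin rfl
  by_cases hsubxy : gF 𝒰 n x ⊆ gF 𝒰 n y
  · -- Case 1: `F x ⊆ F y`; the separating set must contain `y` and not `x`.
    obtain ⟨U, hU𝒰, hXor⟩ := hsep
    rcases hXor with ⟨hxU, hyU⟩ | ⟨hyU, hxU⟩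
    · exact absurd (hsubxy ⟨hU𝒰, hxU⟩).2 hyU
    · refine Or.inr (Or.inl ⟨k, Or.inr ⟨?_, hxnotH⟩⟩)
      simp only [gH, Set.mem_iUnion, Set.mem_inter_iff]
      exact ⟨x, U, ⟨hfin, rfl, hU𝒰, fun h => hxU h.2⟩,
        (mem_sInter_gF_iff 𝒰 n x y).mpr hsubxy, hyU⟩
  · -- Case 2: some member of `F x` misses `y`, i.e. `y ∉ ⋂₀ F x`.
    by_cases hyG : y ∈ gG 𝒰 n k
    · simp only [gG, Set.mem_iUnion] at hyG
      obtain ⟨x', ⟨hf', hk'⟩, hy1⟩ := hyG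
      have hsub' : gF 𝒰 n x' ⊆ gF 𝒰 n y := (mem_sInter_gF_iff 𝒰 n x' y).mp hy1
      by_cases heq : gF 𝒰 n x' = gF 𝒰 n y
      · -- `F y` is itself a class of size `k`, distinct from `F x`: use a bit of the labels.
        have hfy : (gF 𝒰 n y).Finite := heq ▸ hf'
        have hky : (gF 𝒰 n y).ncard = k := heq ▸ hk'
        have hne : gF 𝒰 n x ≠ gF 𝒰 n y := fun h => hsubxy (h ▸ Set.Subset.rfl)
        obtain ⟨m, hm⟩ := Function.ne_iff.mp (gphi_ne 𝒰 c hc n x y hne)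
        refine Or.inr (Or.inr ⟨k, m, ?_⟩)
        rw [Xor', mem_gW_iff 𝒰 c n k m x hfin rfl, mem_gW_iff 𝒰 c n k m y hfy hky]
        cases hbx : gphi 𝒰 c n (gF 𝒰 n x) m
        · refine Or.inr ⟨?_, by simp⟩
          rw [hbx] at hm
          exact (Bool.not_eq_false _).mp (Ne.symm hm)
        · exact Or.inl ⟨rfl, by rw [hbx] at hm; simpa using (Ne.symm hm)⟩
      · -- `F x' ⊊ F y`: pick `U' ∈ F y \ F x'` and use `gH`.
        have hex : ∃ U', U' ∈ gF 𝒰 n y ∧ U' ∉ gF 𝒰 n x' := by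
          by_contra h
          push_neg at h
          exact heq (le_antisymm hsub' h)
        obtain ⟨U', hU'y, hU'x'⟩ := hex
        refine Or.inr (Or.inl ⟨k, Or.inr ⟨?_, hxnotH⟩⟩)
        simp only [gH, Set.mem_iUnion, Set.mem_inter_iff]
        exact ⟨x', U', ⟨hf', hk', hU'y.1, hU'x'⟩, hy1, hU'y.2⟩
    · -- `y` is in no class intersection of size `k`: use `gG`.
      refine Or.inl ⟨k, Or.inl ⟨?_, hyG⟩⟩
      simp only [gG, Set.mem_iUnion]
      exact ⟨x, ⟨hfin, rfl⟩, self_mem_sInter_gF 𝒰 n x⟩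

/-- Assembling the three kinds of sets into a single family indexed by triples. -/
private noncomputable def gV (𝒰 : ℕ → Set (Set X)) (c : X → ℕ → Bool) :
    ℕ × ℕ × ℕ → Set X
  | (n, k, 0) => gG 𝒰 n k
  | (n, k, 1) => gH 𝒰 n k
  | (n, k, m + 2) => gW 𝒰 c n k m

private lemma gV_isOpen (𝒰 : ℕ → Set (Set X)) (c : X → ℕ → Bool)
    (hop : ∀ n, ∀ U ∈ 𝒰 n, IsOpen U) (t : ℕ × ℕ × ℕ) : IsOpen (gV 𝒰 cf t) := by
  obtain ⟨n, k, (_ | _ | m)⟩ := t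
  · exact isOpen_iUnion fun x' => isOpen_iUnion fun h => isOpen_sInter_gF 𝒰 hop n x' h.1
  · refine isOpen_iUnion fun x' => isOpen_iUnion fun U' => isOpen_iUnion fun h => ?_
    exact (isOpen_sInter_gF 𝒰 hop n x' h.1).inter (hop n U' h.2.2.1)
  · exact isOpen_iUnion fun x' => isOpen_iUnion fun h => isOpen_sInter_gF 𝒰 hop n x' h.1

end GruenhageAux

/-- A space of cardinality at most the continuum is Gruenhage iff a countable family of
open sets separates its points. -/
theorem isGruenhage_iff_countable_separating
    {X : Type*} [TopologicalSpace X] (hcard : Cardinal.mk X ≤ Cardinal.continuum) :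
    IsGruenhage X ↔
      ∃ U : ℕ → Set X, (∀ n, IsOpen (U n)) ∧
        ∀ x y : X, x ≠ y → ∃ n, Xor' (x ∈ U n) (y ∈ U n) := by
  constructor
  · rintro ⟨𝒰, hop, hsep⟩
    have h1 : Cardinal.mk (ℕ → Bool) = Cardinal.continuum := by
      rw [Cardinal.mk_arrow]
      simp [Cardinal.two_power_aleph0]
    obtain ⟨c⟩ := Cardinal.lift_mk_le'.mp
      (show Cardinal.lift.{0} (Cardinal.mk X) ≤ Cardinal.lift (Cardinal.mk (ℕ → Bool)) by
        rw [Cardinal.lift_uzero, h1, Cardinal.lift_continuum]; exact hcard)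
    set cf : X → ℕ → Bool := ⇑c with hcf
    have hcinj : Function.Injective cf := c.injective
    refine ⟨fun i => gV 𝒰 cf ((Denumerable.eqv (ℕ × ℕ × ℕ)).symm i), fun i =>
      gV_isOpen 𝒰 cf hop _, fun x y hxy => ?_⟩
    obtain ⟨n, hUsep, hf⟩ := hsep x y hxy
    have main : ∃ t : ℕ × ℕ × ℕ, Xor' (x ∈ gV 𝒰 cf t) (y ∈ gV 𝒰 cf t) := by
      rcases hf with hfx | hfy
      · rcases gkey 𝒰 cf hcinj n x y hfx hUsep with ⟨k, h⟩ | ⟨k, h⟩ | ⟨k, m, h⟩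
        · exact ⟨(n, k, 0), h⟩
        · exact ⟨(n, k, 1), h⟩
        · exact ⟨(n, k, m + 2), h⟩
      · obtain ⟨U, hU𝒰, hXor⟩ := hUsep
        have hsep' : ∃ U ∈ 𝒰 n, Xor' (y ∈ U) (x ∈ U) := ⟨U, hU𝒰, Or.symm hXor⟩
        rcases gkey 𝒰 cf hcinj n y x hfy hsep' with ⟨k, h⟩ | ⟨k, h⟩ | ⟨k, m, h⟩
        · exact ⟨(n, k, 0), Or.symm h⟩
        · exact ⟨(n, k, 1), Or.symm h⟩
        · exact ⟨(n, k, m + 2), Or.symm h⟩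
    obtain ⟨t, ht⟩ := main
    exact ⟨Denumerable.eqv (ℕ × ℕ × ℕ) t, by simpa using ht⟩
  · rintro ⟨U, hUo, hU⟩
    refine ⟨fun n => {U n}, ?_, ?_⟩
    · intro n V hV
      rw [Set.mem_singleton_iff] at hV
      exact hV ▸ hUo n
    · intro x y hxy
      obtain ⟨n, hn⟩ := hU x y hxy
      exact ⟨n, ⟨U n, rfl, hn⟩, Or.inl ((Set.finite_singleton _).subset (Set.sep_subset _ _))⟩
end

section
/- The space of countable ordinals ω₁ (the first uncountable ordinal, equipped with the order topology) is not Gruenhage. In particular, for every countable family (Uₙ)_{n∈ℕ} of open subsets of ω₁ there exist distinct ordinals α, β < ω₁ such that for every n, Uₙ contains either both or neither of α and β. -/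
open Set Ordinal Cardinal

private noncomputable abbrev omk : Ordinal.{0} := (Cardinal.aleph 1).ord
private abbrev OX : Type 1 := {o : Ordinal.{0} // o < (Cardinal.aleph 1).ord}

private lemma ong_sup_lt (f : ℕ → Ordinal.{0}) (h : ∀ n, f n < omk) : (⨆ n, f n) < omk :=
  by
  have h' : ∀ n, f n < Ordinal.omega 1 := by simpa only [omk, Cardinal.ord_aleph] using h
  simpa only [omk, Cardinal.ord_aleph] using Ordinal.iSup_lt_omega_one h'

private lemma ong_kappa_isLimit : Order.IsSuccLimit (omk : Ordinal.{0}) :=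
  Cardinal.isSuccLimit_ord (Cardinal.aleph0_le_aleph 1)

private lemma ong_succ_lt {γ : Ordinal.{0}} (h : γ < omk) : γ + 1 < omk := by
  rw [Ordinal.add_one_eq_succ]; exact ong_kappa_isLimit.succ_lt h

private lemma ong_zero_lt : (0 : Ordinal.{0}) < omk := ong_kappa_isLimit.pos

private lemma ong_sSup_le {s : Set Ordinal.{0}} {b : Ordinal.{0}} (h : ∀ o ∈ s, o ≤ b) :
    sSup s ≤ b := by
  rcases s.eq_empty_or_nonempty with rfl | hne
  · rw [csSup_empty]; exact bot_le
  · exact csSup_le hne h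

/-- Open sets in the subtype contain left intervals at limit points. -/
private lemma ong_open_interval {U : Set OX} (hU : IsOpen U) {z : OX}
    (hz : Order.IsSuccLimit z.1) (hzU : z ∈ U) :
    ∃ γ < z.1, ∀ y : OX, γ < y.1 → y.1 ≤ z.1 → y ∈ U := by
  rw [isOpen_induced_iff] at hU
  obtain ⟨V, hV, rfl⟩ := hU
  obtain ⟨a, ha, hIoo⟩ := (Ordinal.isOpen_iff.1 hV) z.1 hzU hz
  refine ⟨a, ha, fun y h1 h2 => ?_⟩
  rcases h2.lt_or_eq with hlt | he
  · exact hIoo ⟨h1, hlt⟩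
  · have : y = z := Subtype.ext he
    rw [this]; exact hzU

private lemma ong_interval {F : Set (Set OX)} (hop : ∀ U ∈ F, IsOpen U) (hF : F.Finite)
    {z : OX} (hz : Order.IsSuccLimit z.1) (hzF : ∀ U ∈ F, z ∈ U) :
    ∃ γ < z.1, ∀ U ∈ F, ∀ y : OX, γ < y.1 → y.1 ≤ z.1 → y ∈ U := by
  have hch : ∀ U ∈ F, ∃ γ, γ < z.1 ∧ ∀ y : OX, γ < y.1 → y.1 ≤ z.1 → y ∈ U := by
    intro U hU
    obtain ⟨γ, h1, h2⟩ := ong_open_interval (hop U hU) hz (hzF U hU)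
    exact ⟨γ, h1, h2⟩
  choose! g hg1 hg2 using hch
  refine ⟨hF.toFinset.sup g, ?_, ?_⟩
  · rw [Finset.sup_lt_iff (by simpa [Ordinal.bot_eq_zero] using hz.pos)]
    intro U hU; exact hg1 U (hF.mem_toFinset.1 hU)
  · intro U hU y h1 h2
    exact hg2 U hU y (lt_of_le_of_lt (Finset.le_sup (hF.mem_toFinset.2 hU)) h1) h2

/-- Closing-off lemma: a limit point above `δ` closed under countably many monotone functions. -/
private lemma ong_closing (h : ℕ → Ordinal.{0} → Ordinal.{0})
    (hmono : ∀ n ⦃γ γ'⦄, γ ≤ γ' → γ' < omk → h n γ ≤ h n γ')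
    (hlt : ∀ n, ∀ γ < omk, h n γ < omk) (δ : Ordinal.{0}) (hδ : δ < omk) :
    ∃ α : Ordinal.{0}, δ < α ∧ α < omk ∧ Order.IsSuccLimit α ∧ ∀ n, ∀ γ < α, h n γ < α := by
  set H : Ordinal.{0} → Ordinal.{0} := fun γ => (⨆ n, h n γ) ⊔ (γ + 1) with hH
  set a : ℕ → Ordinal.{0} := fun k => H^[k] (δ + 1) with ha
  have hsucc : ∀ k, a (k + 1) = H (a k) := fun k => Function.iterate_succ_apply' H k (δ + 1)
  have haomk : ∀ k, a k < omk := by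
    intro k; induction k with
    | zero => simpa [ha] using ong_succ_lt hδ
    | succ k ih =>
      rw [hsucc k, hH]
      exact max_lt (ong_sup_lt _ fun n => hlt n _ ih) (ong_succ_lt ih)
  have hstep : ∀ k, a k < a (k + 1) := by
    intro k
    rw [hsucc k, hH]
    refine lt_of_lt_of_le ?_ le_sup_right
    rw [Ordinal.add_one_eq_succ]; exact Order.lt_succ _
  refine ⟨⨆ k, a k, ?_, ong_sup_lt a haomk, Ordinal.isSuccLimit_iff.2 ⟨?_, Order.isSuccPrelimit_of_succ_lt ?_⟩, ?_⟩
  · refine lt_of_lt_of_le ?_ (Ordinal.le_iSup a 0)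
    have : a 0 = δ + 1 := rfl
    rw [this, Ordinal.add_one_eq_succ]; exact Order.lt_succ _
  · -- nonzero
    have : a 0 ≤ ⨆ k, a k := Ordinal.le_iSup a 0
    have h0 : (0 : Ordinal) < a 0 := by
      have : a 0 = δ + 1 := rfl
      rw [this, Ordinal.add_one_eq_succ]
      exact (zero_le (a := δ)).trans_lt (Order.lt_succ δ)
    exact (h0.trans_le this).ne'
  · intro b hb
    obtain ⟨k, hk⟩ := Ordinal.lt_iSup_iff.1 hb
    have h1 : Order.succ b ≤ a k := Order.succ_le_of_lt hk
    exact lt_of_le_of_lt h1 (lt_of_lt_of_le (hstep k) (Ordinal.le_iSup a (k + 1)))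
  · intro n γ hγ
    obtain ⟨k, hk⟩ := Ordinal.lt_iSup_iff.1 hγ
    have h1 : h n γ ≤ h n (a k) := hmono n hk.le (haomk k)
    have h2 : h n (a k) ≤ a (k + 1) := by
      rw [hsucc k, hH]
      exact le_trans (Ordinal.le_iSup (fun m => h m (a k)) n) le_sup_left
    exact lt_of_le_of_lt (h1.trans h2)
      (lt_of_lt_of_le (hstep (k + 1)) (Ordinal.le_iSup a (k + 2)))

/-- Per-family key lemma. -/
private lemma ong_key (𝒱 : Set (Set OX)) (hop : ∀ U ∈ 𝒱, IsOpen U) :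
    ∃ (h : Ordinal.{0} → Ordinal.{0}) (t : Ordinal.{0}), t < omk ∧
      (∀ ⦃γ γ'⦄, γ ≤ γ' → γ' < omk → h γ ≤ h γ') ∧
      (∀ γ < omk, h γ < omk) ∧
      (∀ z w : OX, Order.IsSuccLimit z.1 → Order.IsSuccLimit w.1 → t < z.1 → t < w.1 →
        (∀ γ < z.1, h γ < z.1) → (∀ γ < w.1, h γ < w.1) →
        (({U ∈ 𝒱 | z ∈ U}.Infinite ∧ {U ∈ 𝒱 | w ∈ U}.Infinite) ∨
          {U ∈ 𝒱 | z ∈ U} = {U ∈ 𝒱 | w ∈ U})) := by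
  classical
  set fan : OX → Set (Set OX) := fun x => {U ∈ 𝒱 | x ∈ U} with hfan
  have fan_sub : ∀ x : OX, fan x ⊆ 𝒱 := fun x => sep_subset _ _
  have fan_mem : ∀ {x : OX} {U}, U ∈ fan x → x ∈ U := fun h => h.2
  -- the family A k γ
  set A : ℕ → Ordinal.{0} → Set OX := fun k γ =>
    {x : OX | ∃ F : Set (Set OX), F ⊆ 𝒱 ∧ F.Finite ∧ F.ncard = k ∧
      ∀ U ∈ F, ∀ y : OX, γ < y.1 → y.1 ≤ x.1 → y ∈ U} with hA
  set B : Ordinal.{0} → Set OX := fun γ =>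
    {x : OX | (fan x).Finite ∧ ∀ U ∈ fan x, ∀ y : OX, γ < y.1 → y.1 ≤ x.1 → y ∈ U} with hB
  -- sSup helper function
  set sfun : Set OX → Ordinal.{0} := fun S => sSup ((fun x : OX => x.1 + 1) '' S) with hsfun
  have bddS : ∀ S : Set OX, BddAbove ((fun x : OX => x.1 + 1) '' S) := by
    intro S
    refine ⟨omk, fun o ho => ?_⟩
    obtain ⟨x, _, rfl⟩ := ho
    exact (ong_succ_lt x.2).le
  have sfun_mem : ∀ {S : Set OX} {x : OX}, x ∈ S → x.1 + 1 ≤ sfun S := by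
    intro S x hx
    exact le_csSup (bddS S) ⟨x, hx, rfl⟩
  have sfun_bound : ∀ {S : Set OX} {δ : Ordinal.{0}}, (∀ x ∈ S, x.1 ≤ δ) → sfun S ≤ δ + 1 := by
    intro S δ hbd
    refine ong_sSup_le ?_
    rintro o ⟨x, hx, rfl⟩
    exact add_le_add (hbd x hx) le_rfl
  have sfun_mono : ∀ {S T : Set OX}, S ⊆ T → sfun S ≤ sfun T := by
    intro S T hST
    refine ong_sSup_le ?_
    rintro o ⟨x, hx, rfl⟩
    exact le_csSup (bddS T) ⟨x, hST hx, rfl⟩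
  by_cases hQ : ∀ k : ℕ, ∃ γ < omk, ∀ δ < omk, ∃ x ∈ A k γ, δ < x.1
  · -- all fans at large points are infinite
    choose g hgomk hgU using hQ
    refine ⟨fun _ => 0, ⨆ k, g k, ong_sup_lt g hgomk, fun _ _ _ _ => le_rfl,
      fun _ _ => ong_zero_lt, ?_⟩
    intro z w hz hw htz htw _ _
    have inf : ∀ v : OX, (⨆ k, g k) < v.1 → (fan v).Infinite := by
      intro v hv hfin
      set m := (fan v).ncard with hm
      obtain ⟨x, hxA, hxgt⟩ := hgU (m + 1) v.1 v.2
      obtain ⟨F, hF𝒱, hFfin, hFcard, hFint⟩ := hxA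
      have hgv : g (m + 1) < v.1 := lt_of_le_of_lt (Ordinal.le_iSup g (m + 1)) hv
      have hsub : F ⊆ fan v := fun U hU =>
        ⟨hF𝒱 hU, hFint U hU v hgv hxgt.le⟩
      have := Set.ncard_le_ncard hsub hfin
      omega
    exact Or.inl ⟨inf z htz, inf w htw⟩
  · push_neg at hQ
    obtain ⟨k₀, hk₀⟩ := hQ
    -- A k₀ γ is bounded for every γ < omk
    have hbd : ∀ γ < omk, ∃ δ < omk, ∀ x ∈ A k₀ γ, x.1 ≤ δ := by
      intro γ hγ
      obtain ⟨δ, hδomk, hδ⟩ := hk₀ γ hγ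
      exact ⟨δ, hδomk, fun x hx => hδ x hx⟩
    set hA' : Ordinal.{0} → Ordinal.{0} := fun γ => sfun (A k₀ γ) with hhA
    have hA'mono : ∀ ⦃γ γ'⦄, γ ≤ γ' → hA' γ ≤ hA' γ' := by
      intro γ γ' hle
      refine sfun_mono ?_
      rintro x ⟨F, h1, h2, h3, h4⟩
      exact ⟨F, h1, h2, h3, fun U hU y hy1 hy2 => h4 U hU y (lt_of_le_of_lt hle hy1) hy2⟩
    have hA'lt : ∀ γ < omk, hA' γ < omk := by
      intro γ hγ
      obtain ⟨δ, hδomk, hδ⟩ := hbd γ hγ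
      exact lt_of_le_of_lt (sfun_bound hδ) (ong_succ_lt hδomk)
    -- every suitable closed limit point has a finite fan
    have finite_fan : ∀ z : OX, Order.IsSuccLimit z.1 → (∀ γ < z.1, hA' γ < z.1) → (fan z).Finite := by
      intro z hz hcl
      by_contra hinf
      obtain ⟨F, hFsub, hFfin, hFcard⟩ := Set.Infinite.exists_subset_ncard_eq hinf k₀
      obtain ⟨γ, hγz, hγint⟩ := ong_interval (fun U hU => hop U (fan_sub z (hFsub hU))) hFfin hz
        (fun U hU => fan_mem (hFsub hU))
      have hzA : z ∈ A k₀ γ := ⟨F, fun U hU => (hFsub hU).1, hFfin, hFcard, hγint⟩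
      have h1 : z.1 + 1 ≤ hA' γ := sfun_mem hzA
      have h2 : hA' γ < z.1 := hcl γ hγz
      have : z.1 < z.1 := by
        refine lt_of_lt_of_le ?_ (h1.trans h2.le)
        rw [Ordinal.add_one_eq_succ]; exact Order.lt_succ _
      exact absurd this (lt_irrefl _)
    by_cases hR : ∃ γ < omk, ∀ δ < omk, ∃ x ∈ B γ, δ < x.1
    · -- constant finite fan case
      obtain ⟨γR, hγRomk, hRunb⟩ := hR
      -- the "next element" function
      set N : Ordinal.{0} → Set Ordinal.{0} := fun γ =>
        {o | ∃ x : OX, x ∈ B γR ∧ x.1 = o ∧ γ < o} with hN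
      have Nne : ∀ γ < omk, (N γ).Nonempty := by
        intro γ hγ
        obtain ⟨x, hx, hgt⟩ := hRunb γ hγ
        exact ⟨x.1, x, hx, rfl, hgt⟩
      set hN' : Ordinal.{0} → Ordinal.{0} := fun γ => sInf (N γ) with hhN
      have hN'mono : ∀ ⦃γ γ'⦄, γ ≤ γ' → γ' < omk → hN' γ ≤ hN' γ' := by
        intro γ γ' hle hγ'
        refine csInf_le_csInf (OrderBot.bddBelow _) (Nne γ' hγ') ?_
        rintro o ⟨x, hx, rfl, hgt⟩
        exact ⟨x, hx, rfl, lt_of_le_of_lt hle hgt⟩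
      have memN : ∀ γ < omk, ∃ x : OX, x ∈ B γR ∧ x.1 = hN' γ ∧ γ < hN' γ :=
        fun γ hγ => csInf_mem (Nne γ hγ)
      have hN'lt : ∀ γ < omk, hN' γ < omk := by
        intro γ hγ
        obtain ⟨x, _, he, _⟩ := memN γ hγ
        rw [← he]; exact x.2
      -- minimal fan cardinality over B γR above γR
      set MS : Set ℕ := {m | ∃ x : OX, x ∈ B γR ∧ γR < x.1 ∧ (fan x).ncard = m} with hMS
      have MSne : MS.Nonempty := by
        obtain ⟨x, hx, hgt⟩ := hRunb γR hγRomk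
        exact ⟨(fan x).ncard, x, hx, hgt, rfl⟩
      obtain ⟨x₀, hx₀B, hx₀gt, hx₀card⟩ := Nat.sInf_mem MSne
      have minm : ∀ x : OX, x ∈ B γR → γR < x.1 → sInf MS ≤ (fan x).ncard :=
        fun x h1 h2 => Nat.sInf_le ⟨x, h1, h2, rfl⟩
      have fan_eq_x₀ : ∀ x : OX, x ∈ B γR → γR < x.1 → x₀.1 ≤ x.1 → fan x = fan x₀ := by
        intro x h1 h2 h3
        have hsub : fan x ⊆ fan x₀ := by
          rintro U hU
          exact ⟨hU.1, h1.2 U hU x₀ hx₀gt h3⟩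
        refine Set.eq_of_subset_of_ncard_le hsub ?_ hx₀B.1
        rw [hx₀card]; exact minm x h1 h2
      refine ⟨fun γ => hA' γ ⊔ hN' γ, γR ⊔ x₀.1, max_lt hγRomk x₀.2, ?_, ?_, ?_⟩
      · intro γ γ' hle hγ'
        exact sup_le_sup (hA'mono hle) (hN'mono hle hγ')
      · intro γ hγ
        exact max_lt (hA'lt γ hγ) (hN'lt γ hγ)
      · intro z w hz hw htz htw hclz hclw
        have key : ∀ v : OX, Order.IsSuccLimit v.1 → γR ⊔ x₀.1 < v.1 →
            (∀ γ < v.1, hA' γ ⊔ hN' γ < v.1) → fan v = fan x₀ := by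
          intro v hv htv hcl
          have hγRv : γR < v.1 := lt_of_le_of_lt le_sup_left htv
          have hx₀v : x₀.1 < v.1 := lt_of_le_of_lt le_sup_right htv
          have hvfin : (fan v).Finite :=
            finite_fan v hv (fun γ hγ => lt_of_le_of_lt le_sup_left (hcl γ hγ))
          apply Set.Subset.antisymm
          · -- fan v ⊆ fan x₀
            obtain ⟨gba, hgbav, hint⟩ := ong_interval (fun U hU => hop U (fan_sub v hU)) hvfin hv
              (fun U hU => fan_mem hU)
            set gha : Ordinal.{0} := gba ⊔ (γR ⊔ x₀.1) with hgha
            have hghav : gha < v.1 := max_lt hgbav htv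
            obtain ⟨y, hyB, hye, hygt⟩ := memN gha (hghav.trans v.2)
            have hyv : y.1 < v.1 := by
              rw [hye]; exact lt_of_le_of_lt le_sup_right (hcl gha hghav)
            have hyγR : γR < y.1 := by
              rw [hye]; exact lt_of_le_of_lt (le_sup_left.trans le_sup_right) hygt
            have hyx₀ : x₀.1 ≤ y.1 := by
              rw [hye]; exact (le_sup_right.trans le_sup_right).trans hygt.le
            have hfy : fan y = fan x₀ := fan_eq_x₀ y hyB hyγR hyx₀
            intro U hU
            have hyU : y ∈ U := by
              refine hint U hU y ?_ hyv.le
              rw [hye]; exact lt_of_le_of_lt le_sup_left hygt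
            have : U ∈ fan y := ⟨hU.1, hyU⟩
            rwa [hfy] at this
          · -- fan x₀ ⊆ fan v
            obtain ⟨x, hxB, hxgt⟩ := hRunb (x₀.1 ⊔ v.1) (max_lt x₀.2 v.2)
            have hxγR : γR < x.1 :=
              hγRv.trans (lt_of_le_of_lt le_sup_right hxgt)
            have hfx : fan x = fan x₀ :=
              fan_eq_x₀ x hxB hxγR ((le_sup_left.trans_lt hxgt).le)
            intro U hU
            rw [← hfx] at hU
            exact ⟨hU.1, hxB.2 U hU v hγRv (le_sup_right.trans_lt hxgt).le⟩
        exact Or.inr ((key z hz htz hclz).trans (key w hw htw hclw).symm)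
    · -- contradiction case : B γ always bounded
      push_neg at hR
      have hbdB : ∀ γ < omk, ∃ δ < omk, ∀ x ∈ B γ, x.1 ≤ δ := by
        intro γ hγ
        obtain ⟨δ, hδomk, hδ⟩ := hR γ hγ
        exact ⟨δ, hδomk, fun x hx => hδ x hx⟩
      set hB' : Ordinal.{0} → Ordinal.{0} := fun γ => sfun (B γ) with hhB
      have hB'mono : ∀ ⦃γ γ'⦄, γ ≤ γ' → hB' γ ≤ hB' γ' := by
        intro γ γ' hle
        refine sfun_mono ?_
        rintro x ⟨h1, h2⟩
        exact ⟨h1, fun U hU y hy1 hy2 => h2 U hU y (lt_of_le_of_lt hle hy1) hy2⟩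
      have hB'lt : ∀ γ < omk, hB' γ < omk := by
        intro γ hγ
        obtain ⟨δ, hδomk, hδ⟩ := hbdB γ hγ
        exact lt_of_le_of_lt (sfun_bound hδ) (ong_succ_lt hδomk)
      refine ⟨fun γ => hA' γ ⊔ hB' γ, 0, ong_zero_lt, ?_, ?_, ?_⟩
      · intro γ γ' hle _
        exact sup_le_sup (hA'mono hle) (hB'mono hle)
      · intro γ hγ
        exact max_lt (hA'lt γ hγ) (hB'lt γ hγ)
      · intro z w hz hw htz htw hclz hclw
        exfalso
        have hzfin : (fan z).Finite :=
          finite_fan z hz (fun γ hγ => lt_of_le_of_lt le_sup_left (hclz γ hγ))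
        obtain ⟨gba, hgbaz, hint⟩ := ong_interval (fun U hU => hop U (fan_sub z hU)) hzfin hz
          (fun U hU => fan_mem hU)
        have hzB : z ∈ B gba := ⟨hzfin, hint⟩
        have h1 : z.1 + 1 ≤ hB' gba := sfun_mem hzB
        have h2 : hB' gba < z.1 := lt_of_le_of_lt le_sup_right (hclz gba hgbaz)
        have : z.1 < z.1 := by
          refine lt_of_lt_of_le ?_ (h1.trans h2.le)
          rw [Ordinal.add_one_eq_succ]; exact Order.lt_succ _
        exact absurd this (lt_irrefl _)

private lemma ong_main (𝒰 : ℕ → Set (Set OX)) (hop : ∀ n, ∀ U ∈ 𝒰 n, IsOpen U) :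
    ∃ α β : OX, α ≠ β ∧ ∀ n,
      (({U ∈ 𝒰 n | α ∈ U}.Infinite ∧ {U ∈ 𝒰 n | β ∈ U}.Infinite) ∨
        {U ∈ 𝒰 n | α ∈ U} = {U ∈ 𝒰 n | β ∈ U}) := by
  have key := fun n => ong_key (𝒰 n) (hop n)
  choose h t htomk hmono hlt hspec using key
  obtain ⟨a, hδa, haomk, halim, hacl⟩ := ong_closing h hmono hlt (⨆ n, t n) (ong_sup_lt t htomk)
  obtain ⟨b, hab, hbomk, hblim, hbcl⟩ := ong_closing h hmono hlt a haomk
  refine ⟨⟨a, haomk⟩, ⟨b, hbomk⟩, fun hcon => hab.ne (congrArg Subtype.val hcon), fun n => ?_⟩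
  have hta : t n < a := lt_of_le_of_lt (Ordinal.le_iSup t n) hδa
  exact hspec n ⟨a, haomk⟩ ⟨b, hbomk⟩ halim hblim hta (hta.trans hab) (hacl n) (hbcl n)

/-- The space `ω₁` of countable ordinals (with its interval topology) is not Gruenhage;
in particular no countable family of open subsets of `ω₁` separates its points. -/
theorem omega1_not_isGruenhage :
    ¬ IsGruenhage {o : Ordinal.{0} // o < (Cardinal.aleph 1).ord} ∧
    ∀ U : ℕ → Set {o : Ordinal.{0} // o < (Cardinal.aleph 1).ord},
      (∀ n, IsOpen (U n)) →
      ∃ α β : {o : Ordinal.{0} // o < (Cardinal.aleph 1).ord},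
        α ≠ β ∧ ∀ n, (α ∈ U n ↔ β ∈ U n) := by
  constructor
  · rintro ⟨𝒰, hop, hsep⟩
    obtain ⟨α, β, hne, hspec⟩ := ong_main 𝒰 hop
    obtain ⟨n, ⟨U, hU, hxor⟩, hfin⟩ := hsep α β hne
    rcases hspec n with ⟨hα, hβ⟩ | heq
    · rcases hfin with hf | hf
      · exact hα hf
      · exact hβ hf
    · rcases hxor with ⟨hαU, hβU⟩ | ⟨hβU, hαU⟩
      · have : U ∈ {U ∈ 𝒰 n | α ∈ U} := ⟨hU, hαU⟩
        rw [heq] at this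
        exact hβU this.2
      · have : U ∈ {U ∈ 𝒰 n | β ∈ U} := ⟨hU, hβU⟩
        rw [← heq] at this
        exact hαU this.2
  · intro U hUopen
    obtain ⟨α, β, hne, hspec⟩ := ong_main (fun n => {U n}) (by
      rintro n V hV
      rw [Set.mem_singleton_iff] at hV
      rw [hV]; exact hUopen n)
    refine ⟨α, β, hne, fun n => ?_⟩
    rcases hspec n with ⟨hα, _⟩ | heq
    · exact absurd ((Set.finite_singleton (U n)).subset (Set.sep_subset _ _)) hα
    · constructor
      · intro hmem
        have : U n ∈ {V ∈ ({U n} : Set (Set _)) | α ∈ V} := ⟨rfl, hmem⟩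
        rw [heq] at this
        exact this.2
      · intro hmem
        have : U n ∈ {V ∈ ({U n} : Set (Set _)) | β ∈ V} := ⟨rfl, hmem⟩
        rw [← heq] at this
        exact this.2
end

section
/- Let X and Y be Hausdorff topological spaces, let X be Gruenhage, and let f : X → Y be a perfect surjection (continuous, closed, surjective, with compact fibers f⁻¹(y) for every y ∈ Y). Then Y is Gruenhage. -/
namespace GruenhageAux

open Set

variable {X Y : Type*} [TopologicalSpace X] [TopologicalSpace Y]

/-! ### The saturation operator `fstar` -/

/-- `fstar f O` is the set of points of `Y` whose fiber is contained in `O`. -/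
def fstar (f : X → Y) (O : Set X) : Set Y := {w | f ⁻¹' {w} ⊆ O}

lemma isOpen_fstar {f : X → Y} (hf : IsClosedMap f) {O : Set X} (hO : IsOpen O) :
    IsOpen (fstar f O) := by
  have h : fstar f O = (f '' Oᶜ)ᶜ := by
    ext w
    constructor
    · intro hw hmem
      obtain ⟨x, hxO, hfx⟩ := hmem
      exact hxO (hw (by simp [hfx]))
    · intro hw x hx
      by_contra hxO
      exact hw ⟨x, hxO, by simpa using hx⟩
  rw [h]
  exact (hf _ hO.isClosed_compl).isOpen_compl

variable (𝒰 : ℕ → Set (Set X))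

/-! ### Basic structure attached to the Gruenhage sequence `𝒰` -/

/-- The members of `𝒰 n` containing `x`. -/
def Fx (x : X) (n : ℕ) : Set (Set X) := {U ∈ 𝒰 n | x ∈ U}

lemma Fx_subset (x : X) (n : ℕ) : Fx 𝒰 x n ⊆ 𝒰 n := sep_subset _ _

lemma mem_sInter_Fx (x : X) (n : ℕ) : x ∈ ⋂₀ Fx 𝒰 x n :=
  fun _ hU => hU.2

lemma subset_Fx_of_mem_sInter {x' x : X} {n : ℕ} (h : x' ∈ ⋂₀ Fx 𝒰 x n) :
    Fx 𝒰 x n ⊆ Fx 𝒰 x' n :=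
  fun U hU => ⟨hU.1, h U hU⟩

/-- `Hat n k` is the (open) set of points lying in at least `k` members of `𝒰 n`. -/
def Hat (n k : ℕ) : Set X := {x | (k : ℕ∞) ≤ (Fx 𝒰 x n).encard}

lemma mem_Hat {x : X} {n k : ℕ} : x ∈ Hat 𝒰 n k ↔ (k : ℕ∞) ≤ (Fx 𝒰 x n).encard := Iff.rfl

lemma isOpen_Hat (hop : ∀ n, ∀ U ∈ 𝒰 n, IsOpen U) (n k : ℕ) : IsOpen (Hat 𝒰 n k) := by
  rw [isOpen_iff_forall_mem_open]
  intro x hx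
  obtain ⟨t, hts, htk⟩ := Set.exists_subset_encard_eq hx
  have htfin : t.Finite := Set.finite_of_encard_eq_coe htk
  refine ⟨⋂₀ t, ?_, htfin.isOpen_sInter (fun U hU => hop n U (Fx_subset 𝒰 x n (hts hU))), ?_⟩
  · intro x' hx'
    have hsub : t ⊆ Fx 𝒰 x' n := fun U hU => ⟨(hts hU).1, hx' U hU⟩
    rw [mem_Hat, ← htk]
    exact Set.encard_mono hsub
  · exact fun U hU => (hts hU).2

lemma isClosed_encard_le (hop : ∀ n, ∀ U ∈ 𝒰 n, IsOpen U) (n : ℕ) (c : ℕ∞) :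
    IsClosed {x : X | (Fx 𝒰 x n).encard ≤ c} := by
  obtain rfl | hc := eq_or_ne c ⊤
  · have : {x : X | (Fx 𝒰 x n).encard ≤ ⊤} = univ := by
      ext x; simp
    rw [this]; exact isClosed_univ
  · obtain ⟨m, rfl⟩ : ∃ m : ℕ, c = (m : ℕ∞) := ⟨c.toNat, (ENat.coe_toNat hc).symm⟩
    have : {x : X | (Fx 𝒰 x n).encard ≤ (m : ℕ∞)} = (Hat 𝒰 n (m + 1))ᶜ := by
      ext x
      simp only [mem_setOf_eq, mem_compl_iff, mem_Hat, not_le, Nat.cast_add, Nat.cast_one]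
      exact (ENat.lt_add_one_iff (by simp)).symm
    rw [this]
    exact (isOpen_Hat 𝒰 hop n (m + 1)).isClosed_compl

/-- The canonical open set of `x` at a finite set of levels `S` (pairs `(n, k)`). -/
def GSet (x : X) (S : Finset (ℕ × ℕ)) : Set X := ⋂ p ∈ S, ⋂₀ Fx 𝒰 x p.1

lemma mem_GSet_self (x : X) (S : Finset (ℕ × ℕ)) : x ∈ GSet 𝒰 x S := by
  simp only [GSet, mem_iInter]
  exact fun p _ => mem_sInter_Fx 𝒰 x p.1

lemma GSet_congr {x x' : X} {S : Finset (ℕ × ℕ)}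
    (h : ∀ p ∈ S, Fx 𝒰 x p.1 = Fx 𝒰 x' p.1) : GSet 𝒰 x S = GSet 𝒰 x' S :=
  iInter₂_congr fun p hp => by rw [h p hp]

/-- The slots at levels `S`: intersections over `S` of `k`-fold intersections of members. -/
def Slots (S : Finset (ℕ × ℕ)) : Set (Set X) :=
  {W | ∃ G : ℕ × ℕ → Set (Set X),
    (∀ p ∈ S, G p ⊆ 𝒰 p.1 ∧ (G p).Finite ∧ (G p).encard = (p.2 : ℕ∞)) ∧
    W = ⋂ p ∈ S, ⋂₀ G p}

lemma isOpen_slot (hop : ∀ n, ∀ U ∈ 𝒰 n, IsOpen U) {S : Finset (ℕ × ℕ)} {W : Set X}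
    (hW : W ∈ Slots 𝒰 S) : IsOpen W := by
  obtain ⟨G, hG, rfl⟩ := hW
  exact isOpen_biInter_finset fun p hp =>
    (hG p hp).2.1.isOpen_sInter fun U hU => hop p.1 U ((hG p hp).1 hU)

/-- The canonical open set built from the levels in `SC`. -/
def CSet (SC : Finset (ℕ × ℕ)) : Set X := ⋃ p ∈ SC, Hat 𝒰 p.1 p.2

lemma isOpen_CSet (hop : ∀ n, ∀ U ∈ 𝒰 n, IsOpen U) (SC : Finset (ℕ × ℕ)) :
    IsOpen (CSet 𝒰 SC) :=
  isOpen_biUnion fun p _ => isOpen_Hat 𝒰 hop p.1 p.2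

/-- The family on `Y` indexed by `(S, SC, q)`. -/
def Fam (f : X → Y) (S SC : Finset (ℕ × ℕ)) (q : ℕ) : Set (Set Y) :=
  {V | ∃ T : Set (Set X), T ⊆ Slots 𝒰 S ∧ T.Finite ∧ T.ncard = q ∧
    V = fstar f (⋃₀ T ∪ CSet 𝒰 SC)}

lemma isOpen_of_mem_Fam (hop : ∀ n, ∀ U ∈ 𝒰 n, IsOpen U) {f : X → Y} (hf : IsClosedMap f)
    {S SC : Finset (ℕ × ℕ)} {q : ℕ} {V : Set Y} (hV : V ∈ Fam 𝒰 f S SC q) : IsOpen V := by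
  obtain ⟨T, hTs, -, -, rfl⟩ := hV
  exact isOpen_fstar hf
    (((isOpen_sUnion fun W hW => isOpen_slot 𝒰 hop (hTs hW))).union (isOpen_CSet 𝒰 hop SC))

/-! ### Existence of a profile-minimal point in a compact set -/

lemma exists_profile_min (hop : ∀ n, ∀ U ∈ 𝒰 n, IsOpen U)
    {M : Set X} (hMc : IsCompact M) (hMcl : IsClosed M) (hMne : M.Nonempty) :
    ∃ x₀ ∈ M, ∀ x ∈ M, (∀ n, (Fx 𝒰 x n).encard ≤ (Fx 𝒰 x₀ n).encard) →
      ∀ n, (Fx 𝒰 x n).encard = (Fx 𝒰 x₀ n).encard := by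
  classical
  -- attainment of the minimum of `encard (Fx · m)` on a nonempty set
  have hstep : ∀ s : Set X, s.Nonempty → ∀ m : ℕ, ∃ x₁ ∈ s,
      ∀ x' ∈ s, (Fx 𝒰 x₁ m).encard ≤ (Fx 𝒰 x' m).encard := by
    intro s hs m
    by_cases hall : ∀ x ∈ s, (Fx 𝒰 x m).encard = ⊤
    · obtain ⟨x₁, hx₁⟩ := hs
      exact ⟨x₁, hx₁, fun x' hx' => by rw [hall x' hx']; exact le_top⟩
    · push_neg at hall
      obtain ⟨x₂, hx₂s, hx₂⟩ := hall
      have hJne : (Set.Nonempty {j : ℕ | ∃ x ∈ s, (Fx 𝒰 x m).encard = (j : ℕ∞)}) :=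
        ⟨((Fx 𝒰 x₂ m).encard).toNat, x₂, hx₂s, (ENat.coe_toNat hx₂).symm⟩
      obtain ⟨x₁, hx₁s, hx₁⟩ := Nat.sInf_mem hJne
      refine ⟨x₁, hx₁s, fun x' hx' => ?_⟩
      by_cases h' : (Fx 𝒰 x' m).encard = ⊤
      · rw [h']; exact le_top
      · have hmem : ((Fx 𝒰 x' m).encard).toNat ∈
            {j : ℕ | ∃ x ∈ s, (Fx 𝒰 x m).encard = (j : ℕ∞)} :=
          ⟨x', hx', (ENat.coe_toNat h').symm⟩
        have hle := Nat.sInf_le hmem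
        rw [hx₁, ← ENat.coe_toNat h']
        exact_mod_cast hle
  -- the decreasing minimizing sequence of compact sets
  let Ns : ℕ → Set X := fun n => Nat.rec M
    (fun m Nm => {x ∈ Nm | ∀ x' ∈ Nm, (Fx 𝒰 x m).encard ≤ (Fx 𝒰 x' m).encard}) n
  have hNsS : ∀ n, Ns (n + 1) =
      {x ∈ Ns n | ∀ x' ∈ Ns n, (Fx 𝒰 x n).encard ≤ (Fx 𝒰 x' n).encard} := fun n => rfl
  have hsub : ∀ n, Ns (n + 1) ⊆ Ns n := by
    intro n x hx
    rw [hNsS] at hx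
    exact hx.1
  have hinv : ∀ n, IsClosed (Ns n) ∧ (Ns n).Nonempty := by
    intro n
    induction n with
    | zero => exact ⟨hMcl, hMne⟩
    | succ m ih =>
      obtain ⟨hcl, hne⟩ := ih
      constructor
      · have heq : Ns (m + 1) =
            Ns m ∩ ⋂ x' ∈ Ns m, {x | (Fx 𝒰 x m).encard ≤ (Fx 𝒰 x' m).encard} := by
          rw [hNsS]
          ext x
          simp only [mem_sep_iff, mem_inter_iff, mem_iInter, mem_setOf_eq]
        rw [heq]
        exact hcl.inter (isClosed_biInter fun x' _ => isClosed_encard_le 𝒰 hop m _)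
      · obtain ⟨x₁, hx₁, hmin⟩ := hstep (Ns m) hne m
        refine ⟨x₁, ?_⟩
        rw [hNsS]
        exact ⟨hx₁, hmin⟩
  have hNs0c : IsCompact (Ns 0) := hMc
  obtain ⟨x₀, hx₀⟩ := IsCompact.nonempty_iInter_of_sequence_nonempty_isCompact_isClosed
    Ns hsub (fun n => (hinv n).2) hNs0c (fun n => (hinv n).1)
  rw [mem_iInter] at hx₀
  refine ⟨x₀, hx₀ 0, ?_⟩
  intro x hxM hle
  have hxNs : ∀ n, x ∈ Ns n := by
    intro n
    induction n with
    | zero => exact hxM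
    | succ m ih =>
      rw [hNsS]
      refine ⟨ih, fun x' hx' => ?_⟩
      refine le_trans (hle m) ?_
      have h := hx₀ (m + 1)
      rw [hNsS] at h
      exact h.2 x' hx'
  intro n
  refine le_antisymm (hle n) ?_
  have h := hx₀ (n + 1)
  rw [hNsS] at h
  exact h.2 x (hxNs n)

/-! ### The key separation lemma -/

lemma key (hop : ∀ n, ∀ U ∈ 𝒰 n, IsOpen U)
    (hsep : ∀ x y : X, x ≠ y →
      ∃ n, (∃ U ∈ 𝒰 n, Xor' (x ∈ U) (y ∈ U)) ∧
        ((Fx 𝒰 x n).Finite ∨ (Fx 𝒰 y n).Finite))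
    (f : X → Y) (hf : IsClosedMap f)
    (y z : Y) (hyz : y ≠ z) (b₀ : X) (hb₀ : f b₀ = z)
    (hmin : ∀ x : X, (f x = y ∨ f x = z) →
      (∀ n, (Fx 𝒰 x n).encard ≤ (Fx 𝒰 b₀ n).encard) →
      ∀ n, (Fx 𝒰 x n).encard = (Fx 𝒰 b₀ n).encard)
    (hKc : IsCompact (f ⁻¹' {y})) :
    ∃ S SC q, (∃ V ∈ Fam 𝒰 f S SC q, y ∈ V ∧ z ∉ V) ∧
      {V ∈ Fam 𝒰 f S SC q | y ∈ V}.Finite := by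
  classical
  set K : Set X := f ⁻¹' {y} with hK
  set D : Set X := {a ∈ K | ∀ n, (Fx 𝒰 a n).encard ≤ (Fx 𝒰 b₀ n).encard} with hD
  have hDK : ∀ a ∈ D, a ∈ K := fun a ha => ha.1
  have hDeq : ∀ a ∈ D, ∀ n, (Fx 𝒰 a n).encard = (Fx 𝒰 b₀ n).encard := by
    intro a ha n
    have hfy : f a = y := ha.1
    exact hmin a (Or.inl hfy) ha.2 n
  have hb₀z : b₀ ∈ f ⁻¹' {z} := by simp [hb₀]
  set k : ℕ → ℕ := fun n => ((Fx 𝒰 b₀ n).encard).toNat with hk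
  -- Step A : separation of points of `D` from `b₀`
  have stepA : ∀ a ∈ D, ∃ n, Fx 𝒰 a n ≠ Fx 𝒰 b₀ n ∧ (Fx 𝒰 b₀ n).Finite := by
    intro a ha
    have hane : a ≠ b₀ := by
      rintro rfl
      apply hyz
      have hfy : f a = y := ha.1
      rw [← hfy, hb₀]
    obtain ⟨n, ⟨U, hU, hxor⟩, hfin⟩ := hsep a b₀ hane
    refine ⟨n, ?_, ?_⟩
    · rcases hxor with ⟨haU, hbU⟩ | ⟨hbU, haU⟩
      · intro h
        have hmem : U ∈ Fx 𝒰 b₀ n := by rw [← h]; exact ⟨hU, haU⟩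
        exact hbU hmem.2
      · intro h
        have hmem : U ∈ Fx 𝒰 a n := by rw [h]; exact ⟨hU, hbU⟩
        exact haU hmem.2
    · rcases hfin with h | h
      · have h1 : (Fx 𝒰 a n).encard ≠ ⊤ := Set.encard_ne_top_iff.mpr h
        rw [hDeq a ha n] at h1
        exact Set.encard_ne_top_iff.mp h1
      · exact h
  choose! nsel hnsel1 hnsel2 using stepA
  -- Step B : points of `K \ D` strictly exceed `b₀` at some level
  have stepB : ∀ a, a ∈ K → a ∉ D → ∃ m, (Fx 𝒰 b₀ m).encard < (Fx 𝒰 a m).encard := by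
    intro a haK haD
    by_contra h
    push_neg at h
    exact haD ⟨haK, fun n => h n⟩
  choose! msel hmsel using stepB
  -- finiteness of `Fx a n` for `a ∈ D` at a level where `b₀` is finite
  have hDfin : ∀ a ∈ D, ∀ n, (Fx 𝒰 b₀ n).Finite → (Fx 𝒰 a n).Finite := by
    intro a ha n hfb
    rw [← Set.encard_ne_top_iff] at hfb ⊢
    rw [hDeq a ha n]
    exact hfb
  -- membership of "strictly above" points in the hiding Hat
  have hHatmem : ∀ (a : X) (m : ℕ), (Fx 𝒰 b₀ m).encard < (Fx 𝒰 a m).encard →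
      a ∈ Hat 𝒰 m (k m + 1) := by
    intro a m hlt
    have hne : (Fx 𝒰 b₀ m).encard ≠ ⊤ := ne_top_of_lt hlt
    have hco : ((k m : ℕ∞)) = (Fx 𝒰 b₀ m).encard := ENat.coe_toNat hne
    rw [mem_Hat, Nat.cast_add, Nat.cast_one, hco]
    exact (ENat.add_one_le_iff hne).mpr hlt
  have hHatnot : ∀ m : ℕ, (Fx 𝒰 b₀ m).Finite → b₀ ∉ Hat 𝒰 m (k m + 1) := by
    intro m hfb hmem
    have hne : (Fx 𝒰 b₀ m).encard ≠ ⊤ := Set.encard_ne_top_iff.mpr hfb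
    have hco : ((k m : ℕ∞)) = (Fx 𝒰 b₀ m).encard := ENat.coe_toNat hne
    rw [mem_Hat, Nat.cast_add, Nat.cast_one, hco] at hmem
    exact lt_irrefl _ ((ENat.add_one_le_iff hne).mp hmem)
  -- Stage-1 cover of `K`
  set u : X → Set X := fun a =>
    if a ∈ D then ⋂₀ Fx 𝒰 a (nsel a)
    else if a ∈ K then Hat 𝒰 (msel a) (k (msel a) + 1) else ∅ with hu
  have hu_open : ∀ a, IsOpen (u a) := by
    intro a
    by_cases haD : a ∈ D
    · simp only [hu, if_pos haD]
      exact (hDfin a haD _ (hnsel2 a haD)).isOpen_sInter fun U hU => hop _ U hU.1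
    · by_cases haK : a ∈ K
      · simp only [hu, if_neg haD, if_pos haK]
        exact isOpen_Hat 𝒰 hop _ _
      · simp only [hu, if_neg haD, if_neg haK]
        exact isOpen_empty
  have hu_mem : ∀ a ∈ K, a ∈ u a := by
    intro a haK
    by_cases haD : a ∈ D
    · simp only [hu, if_pos haD]
      exact mem_sInter_Fx 𝒰 a _
    · simp only [hu, if_neg haD, if_pos haK]
      exact hHatmem a _ (hmsel a haK haD)
  obtain ⟨t, ht⟩ := hKc.elim_finite_subcover u hu_open
    (fun a haK => mem_iUnion.mpr ⟨a, hu_mem a haK⟩)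
  -- the level set `S`
  set S : Finset (ℕ × ℕ) := (t.filter (· ∈ D)).image (fun a => (nsel a, k (nsel a))) with hS
  have hSkey : ∀ p ∈ S, (Fx 𝒰 b₀ p.1).Finite ∧ ((p.2 : ℕ∞)) = (Fx 𝒰 b₀ p.1).encard := by
    intro p hp
    simp only [hS, Finset.mem_image, Finset.mem_filter] at hp
    obtain ⟨a, ⟨hat, haD⟩, rfl⟩ := hp
    have hfin := hnsel2 a haD
    exact ⟨hfin, ENat.coe_toNat (Set.encard_ne_top_iff.mpr hfin)⟩
  -- Step C : every point of `D` differs from `b₀` at some level of `S`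
  have stepC : ∀ a ∈ D, ∃ p ∈ S, Fx 𝒰 a p.1 ≠ Fx 𝒰 b₀ p.1 := by
    intro a haD
    have haK : a ∈ K := haD.1
    have hmem := ht haK
    rw [mem_iUnion₂] at hmem
    obtain ⟨a', ha't, hau⟩ := hmem
    by_cases ha'D : a' ∈ D
    · rw [hu] at hau
      simp only [if_pos ha'D] at hau
      have hsub : Fx 𝒰 a' (nsel a') ⊆ Fx 𝒰 a (nsel a') := subset_Fx_of_mem_sInter 𝒰 hau
      have hfa' : (Fx 𝒰 a' (nsel a')).Finite := hDfin a' ha'D _ (hnsel2 a' ha'D)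
      have heq : Fx 𝒰 a' (nsel a') = Fx 𝒰 a (nsel a') := by
        apply hfa'.eq_of_subset_of_encard_le hsub
        rw [hDeq a haD (nsel a'), ← hDeq a' ha'D (nsel a')]
      refine ⟨(nsel a', k (nsel a')), ?_, ?_⟩
      · simp only [hS, Finset.mem_image, Finset.mem_filter]
        exact ⟨a', ⟨ha't, ha'D⟩, rfl⟩
      · simpa only [← heq] using hnsel1 a' ha'D
    · by_cases ha'K : a' ∈ K
      · rw [hu] at hau
        simp only [if_neg ha'D, if_pos ha'K] at hau
        exfalso
        rw [mem_Hat] at hau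
        have hlt := hmsel a' ha'K ha'D
        have hne : (Fx 𝒰 b₀ (msel a')).encard ≠ ⊤ := ne_top_of_lt hlt
        have hco : ((k (msel a') : ℕ∞)) = (Fx 𝒰 b₀ (msel a')).encard := ENat.coe_toNat hne
        rw [Nat.cast_add, Nat.cast_one, hco] at hau
        have h2 := haD.2 (msel a')
        exact lt_irrefl _ ((ENat.add_one_le_iff hne).mp (hau.trans h2))
      · rw [hu] at hau
        simp only [if_neg ha'D, if_neg ha'K] at hau
        exact absurd hau (notMem_empty a)
  -- `b₀` avoids the canonical sets of points of `D`
  have hGSb₀ : ∀ a ∈ D, b₀ ∉ GSet 𝒰 a S := by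
    intro a haD hmem
    obtain ⟨p, hpS, hne⟩ := stepC a haD
    apply hne
    have hb₀p : b₀ ∈ ⋂₀ Fx 𝒰 a p.1 := by
      simp only [GSet, mem_iInter] at hmem
      exact hmem p hpS
    have hsub : Fx 𝒰 a p.1 ⊆ Fx 𝒰 b₀ p.1 := subset_Fx_of_mem_sInter 𝒰 hb₀p
    have hfa : (Fx 𝒰 a p.1).Finite := hDfin a haD _ (hSkey p hpS).1
    exact hfa.eq_of_subset_of_encard_le hsub (hDeq a haD p.1).ge
  -- `D` is compact
  have hDc : IsCompact D := by
    have heq : D = K ∩ ⋂ n, {x : X | (Fx 𝒰 x n).encard ≤ (Fx 𝒰 b₀ n).encard} := by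
      ext a
      simp only [hD, mem_sep_iff, mem_inter_iff, mem_iInter, mem_setOf_eq]
    rw [heq]
    exact hKc.inter_right (isClosed_iInter fun n => isClosed_encard_le 𝒰 hop n _)
  -- Stage-2 cover of `D` by full canonical sets
  set v : X → Set X := fun a => if a ∈ D then GSet 𝒰 a S else ∅ with hv
  have hv_open : ∀ a, IsOpen (v a) := by
    intro a
    by_cases haD : a ∈ D
    · simp only [hv, if_pos haD]
      exact isOpen_biInter_finset fun p hp =>
        (hDfin a haD _ (hSkey p hp).1).isOpen_sInter fun U hU => hop _ U hU.1
    · simp only [hv, if_neg haD]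
      exact isOpen_empty
  obtain ⟨B, hB⟩ := hDc.elim_finite_subcover v hv_open
    (fun a haD => mem_iUnion.mpr ⟨a, by simp only [hv, if_pos haD]; exact mem_GSet_self 𝒰 a S⟩)
  -- Stage-3 : hide the remaining part of `K`
  set K₂ : Set X := K \ ⋃ a ∈ B, v a with hK₂
  have hK₂c : IsCompact K₂ := hKc.diff (isOpen_biUnion fun a _ => hv_open a)
  have hK₂D : ∀ x ∈ K₂, x ∈ K ∧ x ∉ D := by
    intro x hx
    exact ⟨hx.1, fun hxD => hx.2 (hB hxD)⟩
  set w : X → Set X := fun a =>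
    if a ∈ K ∧ a ∉ D then Hat 𝒰 (msel a) (k (msel a) + 1) else ∅ with hw
  have hw_open : ∀ a, IsOpen (w a) := by
    intro a
    by_cases hc : a ∈ K ∧ a ∉ D
    · simp only [hw, if_pos hc]; exact isOpen_Hat 𝒰 hop _ _
    · simp only [hw, if_neg hc]; exact isOpen_empty
  have hw_mem : ∀ x ∈ K₂, x ∈ w x := by
    intro x hx
    obtain ⟨hxK, hxD⟩ := hK₂D x hx
    simp only [hw, if_pos (And.intro hxK hxD)]
    exact hHatmem x _ (hmsel x hxK hxD)
  obtain ⟨t₂, ht₂⟩ := hK₂c.elim_finite_subcover w hw_open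
    (fun x hx => mem_iUnion.mpr ⟨x, hw_mem x hx⟩)
  -- the canonical hiding set `C`
  set SC : Finset (ℕ × ℕ) :=
    S.image (fun p => (p.1, p.2 + 1)) ∪
      (t₂.filter (fun a => a ∈ K ∧ a ∉ D)).image (fun a => (msel a, k (msel a) + 1)) with hSC
  set C : Set X := CSet 𝒰 SC with hC
  have hSCprop : ∀ p ∈ SC, (Fx 𝒰 b₀ p.1).Finite ∧ p.2 = k p.1 + 1 := by
    intro p hp
    simp only [hSC, Finset.mem_union, Finset.mem_image, Finset.mem_filter] at hp
    rcases hp with ⟨q', hq', rfl⟩ | ⟨a, ⟨hat, haK, haD⟩, rfl⟩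
    · obtain ⟨hf, hco⟩ := hSkey q' hq'
      refine ⟨hf, ?_⟩
      have : ((q'.2 : ℕ∞)) = ((k q'.1 : ℕ∞)) := by
        rw [hco, hk]
        exact (ENat.coe_toNat (Set.encard_ne_top_iff.mpr hf)).symm
      have hq2 : q'.2 = k q'.1 := by exact_mod_cast this
      simp [hq2]
    · have hlt := hmsel a haK haD
      exact ⟨Set.encard_ne_top_iff.mp (ne_top_of_lt hlt), rfl⟩
  have hb₀C : b₀ ∉ C := by
    rw [hC, CSet]
    rw [mem_iUnion₂]
    rintro ⟨p, hp, hmem⟩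
    obtain ⟨hf, hp2⟩ := hSCprop p hp
    rw [hp2] at hmem
    exact hHatnot p.1 hf hmem
  -- `K` is covered by the canonical sets together with `C`
  have hKcover : K ⊆ (⋃ a ∈ B, v a) ∪ C := by
    intro x hxK
    by_cases hx : x ∈ ⋃ a ∈ B, v a
    · exact Or.inl hx
    · right
      have hxK₂ : x ∈ K₂ := ⟨hxK, hx⟩
      have hmem := ht₂ hxK₂
      rw [mem_iUnion₂] at hmem
      obtain ⟨a, hat₂, hxw⟩ := hmem
      rw [hw] at hxw
      by_cases hcnd : a ∈ K ∧ a ∉ D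
      · simp only [if_pos hcnd] at hxw
        rw [hC, CSet, mem_iUnion₂]
        refine ⟨(msel a, k (msel a) + 1), ?_, hxw⟩
        simp only [hSC, Finset.mem_union, Finset.mem_image, Finset.mem_filter]
        right
        exact ⟨a, ⟨hat₂, hcnd⟩, rfl⟩
      · simp only [if_neg hcnd] at hxw
        exact absurd hxw (notMem_empty x)
  -- the surviving set `P`
  set P : Set X := K \ C with hP
  have hSsub : ∀ p ∈ S, (p.1, p.2 + 1) ∈ SC := by
    intro p hp
    simp only [hSC, Finset.mem_union, Finset.mem_image]
    left
    exact ⟨p, hp, rfl⟩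
  have hPdom : ∀ x ∈ P, ∀ p ∈ S, (Fx 𝒰 x p.1).encard ≤ (p.2 : ℕ∞) := by
    intro x hx p hp
    by_contra hgt
    push_neg at hgt
    apply hx.2
    rw [hC, CSet, mem_iUnion₂]
    refine ⟨(p.1, p.2 + 1), hSsub p hp, ?_⟩
    rw [mem_Hat, Nat.cast_add, Nat.cast_one]
    exact (ENat.add_one_le_iff (by simp)).mpr hgt
  have hPeq : ∀ x ∈ P, ∃ a, a ∈ B ∧ a ∈ D ∧ ∀ p ∈ S, Fx 𝒰 x p.1 = Fx 𝒰 a p.1 := by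
    intro x hx
    have hxv : x ∈ ⋃ a ∈ B, v a := by
      rcases hKcover hx.1 with h | h
      · exact h
      · exact absurd h hx.2
    rw [mem_iUnion₂] at hxv
    obtain ⟨a, haB, hxa⟩ := hxv
    rw [hv] at hxa
    by_cases haD : a ∈ D
    · simp only [if_pos haD] at hxa
      refine ⟨a, haB, haD, fun p hp => ?_⟩
      have hxp : x ∈ ⋂₀ Fx 𝒰 a p.1 := by
        simp only [GSet, mem_iInter] at hxa
        exact hxa p hp
      have hsub : Fx 𝒰 a p.1 ⊆ Fx 𝒰 x p.1 := subset_Fx_of_mem_sInter 𝒰 hxp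
      have hfa : (Fx 𝒰 a p.1).Finite := hDfin a haD _ (hSkey p hp).1
      have hle : (Fx 𝒰 x p.1).encard ≤ (Fx 𝒰 a p.1).encard := by
        have h1 := hPdom x hx p hp
        have h2 : ((p.2 : ℕ∞)) = (Fx 𝒰 a p.1).encard := by
          rw [(hSkey p hp).2, hDeq a haD p.1]
        rwa [h2] at h1
      exact (hfa.eq_of_subset_of_encard_le hsub hle).symm
    · simp only [if_neg haD] at hxa
      exact absurd hxa (notMem_empty x)
  -- the forced cover `Tstar`
  set Tstar : Set (Set X) := {W | ∃ x ∈ P, W = GSet 𝒰 x S} with hTstar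
  have hTstar_fin : Tstar.Finite := by
    apply Set.Finite.subset (B.finite_toSet.image (fun a => GSet 𝒰 a S))
    rintro W ⟨x, hxP, rfl⟩
    obtain ⟨a, haB, haD, hcols⟩ := hPeq x hxP
    exact ⟨a, haB, (GSet_congr 𝒰 hcols).symm⟩
  have hTstar_slots : Tstar ⊆ Slots 𝒰 S := by
    rintro W ⟨x, hxP, rfl⟩
    obtain ⟨a, haB, haD, hcols⟩ := hPeq x hxP
    refine ⟨fun p => Fx 𝒰 x p.1, fun p hp => ?_, rfl⟩
    have hcard : (Fx 𝒰 x p.1).encard = (p.2 : ℕ∞) := by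
      rw [hcols p hp, hDeq a haD p.1, ← (hSkey p hp).2]
    refine ⟨Fx_subset 𝒰 x p.1, ?_, hcard⟩
    rw [← Set.encard_ne_top_iff, hcard]
    simp
  set q : ℕ := Tstar.ncard with hq
  set V : Set Y := fstar f (⋃₀ Tstar ∪ C) with hV
  have hVmem : V ∈ Fam 𝒰 f S SC q := ⟨Tstar, hTstar_slots, hTstar_fin, rfl, rfl⟩
  have hyV : y ∈ V := by
    show f ⁻¹' {y} ⊆ ⋃₀ Tstar ∪ C
    intro x hx
    by_cases hxC : x ∈ C
    · exact Or.inr hxC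
    · left
      exact ⟨GSet 𝒰 x S, ⟨x, ⟨hx, hxC⟩, rfl⟩, mem_GSet_self 𝒰 x S⟩
  have hzV : z ∉ V := by
    intro hz
    have hb₀mem : b₀ ∈ ⋃₀ Tstar ∪ C := hz hb₀z
    rcases hb₀mem with h | h
    · obtain ⟨W, hWT, hb₀W⟩ := h
      obtain ⟨x, hxP, rfl⟩ := hWT
      obtain ⟨a, haB, haD, hcols⟩ := hPeq x hxP
      rw [GSet_congr 𝒰 hcols] at hb₀W
      exact hGSb₀ a haD hb₀W
    · exact hb₀C h
  refine ⟨S, SC, q, ⟨V, hVmem, hyV, hzV⟩, ?_⟩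
  apply Set.Finite.subset (Set.finite_singleton V)
  rintro V' ⟨⟨T, hTslots, hTfin, hTcard, rfl⟩, hyV'⟩
  have hKsub : K ⊆ ⋃₀ T ∪ C := hyV'
  have hTsub : Tstar ⊆ T := by
    rintro W ⟨x, hxP, rfl⟩
    have hxm : x ∈ ⋃₀ T := by
      rcases hKsub hxP.1 with h | h
      · exact h
      · exact absurd h hxP.2
    obtain ⟨W', hW'T, hxW'⟩ := hxm
    obtain ⟨G, hG, rfl⟩ := hTslots hW'T
    have hGeq : ∀ p ∈ S, G p = Fx 𝒰 x p.1 := by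
      intro p hp
      have hxp : x ∈ ⋂₀ G p := by
        simp only [mem_iInter] at hxW'
        exact hxW' p hp
      have hsub : G p ⊆ Fx 𝒰 x p.1 := fun U hU => ⟨(hG p hp).1 hU, hxp U hU⟩
      apply (hG p hp).2.1.eq_of_subset_of_encard_le hsub
      rw [(hG p hp).2.2]
      exact hPdom x hxP p hp
    have heq : (⋂ p ∈ S, ⋂₀ G p) = GSet 𝒰 x S :=
      iInter₂_congr fun p hp => by rw [hGeq p hp]
    exact heq ▸ hW'T
  have hTeq : Tstar = T := by
    apply Set.eq_of_subset_of_ncard_le hTsub _ hTfin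
    rw [hTcard]
  rw [mem_singleton_iff, hV, ← hTeq]

end GruenhageAux

/-- Perfect (continuous, closed, compact-fibered) surjective images of Gruenhage
Hausdorff spaces are Gruenhage. -/
theorem isGruenhage_perfect_image
    {X Y : Type*} [TopologicalSpace X] [TopologicalSpace Y] [T2Space X] [T2Space Y]
    (hX : IsGruenhage X) (f : X → Y)
    (hcont : Continuous f) (hclosed : IsClosedMap f) (hsurj : Function.Surjective f)
    (hfib : ∀ y : Y, IsCompact (f ⁻¹' {y})) :
    IsGruenhage Y := by
  classical
  obtain ⟨𝒰, hop, hsep⟩ := hX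
  have hsep' : ∀ x y : X, x ≠ y →
      ∃ n, (∃ U ∈ 𝒰 n, Xor' (x ∈ U) (y ∈ U)) ∧
        ((GruenhageAux.Fx 𝒰 x n).Finite ∨ (GruenhageAux.Fx 𝒰 y n).Finite) := hsep
  let Idx := Finset (ℕ × ℕ) × Finset (ℕ × ℕ) × ℕ
  let Va : ℕ → Set (Set Y) := fun n => (Encodable.decode (α := Idx) n).elim ∅
    (fun i => GruenhageAux.Fam 𝒰 f i.1 i.2.1 i.2.2)
  have hVaenc : ∀ (S SC : Finset (ℕ × ℕ)) (q : ℕ),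
      Va (Encodable.encode ((S, SC, q) : Idx)) = GruenhageAux.Fam 𝒰 f S SC q := by
    intro S SC q
    show (Encodable.decode (α := Idx) (Encodable.encode ((S, SC, q) : Idx))).elim ∅
      (fun i => GruenhageAux.Fam 𝒰 f i.1 i.2.1 i.2.2) = _
    rw [Encodable.encodek]
    rfl
  have hVaopen : ∀ n, ∀ U ∈ Va n, IsOpen U := by
    intro n U hU
    rcases hdec : Encodable.decode (α := Idx) n with _ | i
    · have hVn : Va n = ∅ := by
        show (Encodable.decode (α := Idx) n).elim ∅
          (fun i => GruenhageAux.Fam 𝒰 f i.1 i.2.1 i.2.2) = ∅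
        rw [hdec]
        rfl
      rw [hVn] at hU
      exact absurd hU (Set.notMem_empty U)
    · have hVn : Va n = GruenhageAux.Fam 𝒰 f i.1 i.2.1 i.2.2 := by
        show (Encodable.decode (α := Idx) n).elim ∅
          (fun i => GruenhageAux.Fam 𝒰 f i.1 i.2.1 i.2.2) = _
        rw [hdec]
        rfl
      rw [hVn] at hU
      exact GruenhageAux.isOpen_of_mem_Fam 𝒰 hop hclosed hU
  refine ⟨Va, hVaopen, ?_⟩
  intro y z hyz
  obtain ⟨ay, hay⟩ := hsurj y
  set M : Set X := f ⁻¹' {y} ∪ f ⁻¹' {z} with hM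
  have hMc : IsCompact M := (hfib y).union (hfib z)
  have hMne : M.Nonempty := ⟨ay, Or.inl (by simp [hay])⟩
  obtain ⟨x₀, hx₀M, hx₀min⟩ :=
    GruenhageAux.exists_profile_min 𝒰 hop hMc hMc.isClosed hMne
  rcases hx₀M with hx₀K | hx₀L
  · -- `f x₀ = y` : apply the key lemma with the roles of `y` and `z` swapped
    have hfx₀ : f x₀ = y := hx₀K
    have hmin' : ∀ x : X, (f x = z ∨ f x = y) →
        (∀ m, (GruenhageAux.Fx 𝒰 x m).encard ≤ (GruenhageAux.Fx 𝒰 x₀ m).encard) →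
        ∀ m, (GruenhageAux.Fx 𝒰 x m).encard = (GruenhageAux.Fx 𝒰 x₀ m).encard := by
      intro x hx hle
      apply hx₀min x _ hle
      rcases hx with h | h
      · exact Or.inr (by simp [h])
      · exact Or.inl (by simp [h])
    obtain ⟨S, SC, q, ⟨V, hVF, hzV, hyV⟩, hfin⟩ :=
      GruenhageAux.key 𝒰 hop hsep' f hclosed z y hyz.symm x₀ hfx₀ hmin' (hfib z)
    refine ⟨Encodable.encode ((S, SC, q) : Idx), ?_, ?_⟩
    · rw [hVaenc]
      exact ⟨V, hVF, Or.inr ⟨hzV, hyV⟩⟩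
    · right
      rw [hVaenc]
      exact hfin
  · -- `f x₀ = z`
    have hfx₀ : f x₀ = z := hx₀L
    have hmin' : ∀ x : X, (f x = y ∨ f x = z) →
        (∀ m, (GruenhageAux.Fx 𝒰 x m).encard ≤ (GruenhageAux.Fx 𝒰 x₀ m).encard) →
        ∀ m, (GruenhageAux.Fx 𝒰 x m).encard = (GruenhageAux.Fx 𝒰 x₀ m).encard := by
      intro x hx hle
      apply hx₀min x _ hle
      rcases hx with h | h
      · exact Or.inl (by simp [h])
      · exact Or.inr (by simp [h])
    obtain ⟨S, SC, q, ⟨V, hVF, hyV, hzV⟩, hfin⟩ :=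
      GruenhageAux.key 𝒰 hop hsep' f hclosed y z hyz x₀ hfx₀ hmin' (hfib y)
    refine ⟨Encodable.encode ((S, SC, q) : Idx), ?_, ?_⟩
    · rw [hVaenc]
      exact ⟨V, hVF, Or.inl ⟨hyV, hzV⟩⟩
    · left
      rw [hVaenc]
      exact hfin
end
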